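/- arXiv:0706.2908 — 7 statements merged into one kernel-verified Lean document; each statement's English description precedes it below -/
import Mathlib

section
/- The number of partitions of n in which no part has multiplicity p or more equals the number of partitions of n into parts not divisible by p. -/
open Multiset Finset

namespace GlaisherAux

variable {p : ℕ}

lemma maxPow_decomp (p b : ℕ) : p ^ p.maxPowDiv b * (b / p ^ p.maxPowDiv b) = b :=
  Nat.mul_div_cancel' (Nat.maxPowDiv.pow_dvd (p := p) (n := b))

lemma not_dvd_ordCompl (hp : 2 ≤ p) {b : ℕ} (hb : 0 < b) :
    ¬ p ∣ b / p ^ p.maxPowDiv b := by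
  intro ⟨c, hc⟩
  have hd := maxPow_decomp p b
  rw [hc] at hd
  have hb' : p ^ (p.maxPowDiv b + 1) ∣ b := by
    refine ⟨c, ?_⟩
    conv_lhs => rw [← hd]
    ring
  have : p.maxPowDiv b + 1 ≤ p.maxPowDiv b := (Nat.pow_dvd_iff_le_padicValNat (show p ≠ 1 by omega) (show b ≠ 0 by omega)).mp hb'
  omega

lemma maxPowDiv_eq_zero (hp : 2 ≤ p) {a : ℕ} (ha : ¬ p ∣ a) : p.maxPowDiv a = 0 := by
  by_contra h
  exact ha (dvd_trans (dvd_pow_self p h) (Nat.maxPowDiv.pow_dvd (p := p) (n := a)))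

lemma maxPowDiv_pow_mul (hp : 2 ≤ p) {a : ℕ} (ha : ¬ p ∣ a) (k : ℕ) :
    p.maxPowDiv (p ^ k * a) = k := by
  have ha0 : 0 < a := Nat.pos_of_ne_zero (fun h => ha (h ▸ dvd_zero p))
  rw [show p.maxPowDiv (p ^ k * a) = padicValNat p (p ^ k * a) from rfl,
    Nat.maxPowDiv.base_pow_mul (show 1 < p by omega) ha0.ne',
    show padicValNat p a = p.maxPowDiv a from rfl, maxPowDiv_eq_zero hp ha, zero_add]

lemma ordCompl_pow_mul (hp : 2 ≤ p) {a : ℕ} (ha : ¬ p ∣ a) (k : ℕ) :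
    (p ^ k * a) / p ^ p.maxPowDiv (p ^ k * a) = a := by
  rw [maxPowDiv_pow_mul hp ha k, Nat.mul_div_cancel_left _ (pow_pos (show 0 < p by omega) k)]

lemma key_inj (hp : 2 ≤ p) {a a' k j : ℕ} (ha : ¬ p ∣ a) (ha' : ¬ p ∣ a')
    (h : p ^ k * a = p ^ j * a') : k = j ∧ a = a' := by
  have h1 : k = j := by
    have := maxPowDiv_pow_mul hp ha k
    rw [h, maxPowDiv_pow_mul hp ha' j] at this; omega
  subst h1
  exact ⟨rfl, Nat.eq_of_mul_eq_mul_left (pow_pos (show 0 < p by omega) k) h⟩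

lemma exists_decomp (hp : 2 ≤ p) {b : ℕ} (hb : 0 < b) :
    ∃ k a, ¬ p ∣ a ∧ b = p ^ k * a :=
  ⟨p.maxPowDiv b, b / p ^ p.maxPowDiv b, not_dvd_ordCompl hp hb, (maxPow_decomp p b).symm⟩

/- digit lemmas -/

lemma sum_digit_mod (p m : ℕ) : ∀ K, ∑ k ∈ range K, m / p ^ k % p * p ^ k = m % p ^ K := by
  intro K
  induction K with
  | zero => simp [Nat.mod_one]
  | succ K ih =>
    rw [Finset.sum_range_succ, ih, pow_succ, Nat.mod_mul]
    ring

lemma digit_sum_lt (hp : 2 ≤ p) (c : ℕ → ℕ) (hc : ∀ j, c j < p) :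
    ∀ K, ∑ j ∈ range K, c j * p ^ j < p ^ K := by
  intro K
  induction K with
  | zero => simp
  | succ K ih =>
    rw [Finset.sum_range_succ, pow_succ]
    have h1 : c K * p ^ K ≤ (p - 1) * p ^ K :=
      Nat.mul_le_mul_right _ (by have := hc K; omega)
    nlinarith [ih, hc K, pow_pos (show 0 < p by omega) K]

lemma digit_extract (hp : 2 ≤ p) (c : ℕ → ℕ) (hc : ∀ j, c j < p) (N : ℕ)
    (hN : ∀ j, N ≤ j → c j = 0) (k : ℕ) :
    (∑ j ∈ range N, c j * p ^ j) / p ^ k % p = c k := by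
  rcases le_or_gt N k with hk | hk
  · have h1 : ∑ j ∈ range N, c j * p ^ j < p ^ k :=
      lt_of_lt_of_le (digit_sum_lt hp c hc N) (Nat.pow_le_pow_right (by omega) hk)
    rw [Nat.div_eq_of_lt h1, Nat.zero_mod, hN k hk]
  · -- split the sum
    have hsplit : ∑ j ∈ range N, c j * p ^ j =
        (∑ j ∈ range k, c j * p ^ j) + p ^ k * (c k + p * ∑ i ∈ range (N - (k+1)), c (k+1+i) * p ^ i) := by
      rw [Finset.range_eq_Ico, ← Finset.sum_Ico_consecutive _ (Nat.zero_le (k+1)) hk,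
        ← Finset.range_eq_Ico]
      rw [Finset.sum_range_succ, Finset.sum_Ico_eq_sum_range]
      have htail : ∑ i ∈ range (N - (k+1)), c (k+1+i) * p ^ (k+1+i)
          = p ^ k * (p * ∑ i ∈ range (N - (k+1)), c (k+1+i) * p ^ i) := by
        rw [Finset.mul_sum, Finset.mul_sum]
        refine Finset.sum_congr rfl fun i _ => ?_
        rw [show k+1+i = k+(1+i) by omega, pow_add, pow_add, pow_one]
        ring
      rw [htail]
      ring
    rw [hsplit]
    have hA : (∑ j ∈ range k, c j * p ^ j) < p ^ k := digit_sum_lt hp c hc k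
    rw [Nat.add_mul_div_left _ _ (pow_pos (show 0 < p by omega) k), Nat.div_eq_of_lt hA, zero_add,
      Nat.add_mul_mod_self_left, Nat.mod_eq_of_lt (hc k)]


/- the two maps -/

def gf (p : ℕ) (s : Multiset ℕ) : Multiset ℕ :=
  s.bind fun b => Multiset.replicate (p ^ p.maxPowDiv b) (b / p ^ p.maxPowDiv b)

def gg (p : ℕ) (t : Multiset ℕ) : Multiset ℕ :=
  ∑ a ∈ t.toFinset, ∑ k ∈ range (t.count a), Multiset.replicate (t.count a / p ^ k % p) (a * p ^ k)

lemma mem_gf (hp : 2 ≤ p) {s : Multiset ℕ} (hs : ∀ b ∈ s, 0 < b) {y : ℕ} (hy : y ∈ gf p s) :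
    0 < y ∧ ¬ p ∣ y := by
  rw [gf, Multiset.mem_bind] at hy
  obtain ⟨b, hb, hyb⟩ := hy
  rw [Multiset.eq_of_mem_replicate hyb]
  have hb0 := hs b hb
  refine ⟨?_, not_dvd_ordCompl hp hb0⟩
  have := maxPow_decomp p b
  by_contra h
  simp only [Nat.not_lt, Nat.le_zero] at h
  rw [h, mul_zero] at this
  omega

lemma sum_gf (p : ℕ) (s : Multiset ℕ) : (gf p s).sum = s.sum := by
  rw [gf, Multiset.sum_bind]
  congr 1
  rw [show (fun b => (Multiset.replicate (p ^ p.maxPowDiv b) (b / p ^ p.maxPowDiv b)).sum) = id from ?_]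
  · exact Multiset.map_id s
  funext b
  simp [Multiset.sum_replicate, maxPow_decomp p b]

lemma count_gf (hp : 2 ≤ p) {a : ℕ} (ha : ¬ p ∣ a) (s : Multiset ℕ) (N : ℕ)
    (hs : ∀ b ∈ s, 0 < b ∧ b < p ^ N) :
    (gf p s).count a = ∑ k ∈ range N, p ^ k * s.count (p ^ k * a) := by
  induction s using Multiset.induction with
  | empty => simp [gf]
  | cons b s ih =>
    have hb := hs b (Multiset.mem_cons_self b s)
    have hs' : ∀ x ∈ s, 0 < x ∧ x < p ^ N := fun x hx => hs x (Multiset.mem_cons_of_mem hx)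
    rw [gf, Multiset.cons_bind, Multiset.count_add, ← gf, ih hs']
    have hrhs : ∀ k, (b ::ₘ s).count (p ^ k * a) = s.count (p ^ k * a) + if p ^ k * a = b then 1 else 0 := by
      intro k; rw [Multiset.count_cons]
    simp only [hrhs, Nat.mul_add, Finset.sum_add_distrib]
    have key : (Multiset.replicate (p ^ p.maxPowDiv b) (b / p ^ p.maxPowDiv b)).count a
        = ∑ k ∈ range N, p ^ k * if p ^ k * a = b then 1 else 0 := by
      rw [Multiset.count_replicate]
      by_cases hab : b / p ^ p.maxPowDiv b = a
      · rw [if_pos hab]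
        have hbd : b = p ^ p.maxPowDiv b * a := by rw [← hab, maxPow_decomp]
        have hvN : p.maxPowDiv b < N := by
          have h1 : p ^ p.maxPowDiv b ≤ b := Nat.le_of_dvd hb.1 (Nat.maxPowDiv.pow_dvd (p := p) (n := b))
          have h2 : p ^ p.maxPowDiv b < p ^ N := lt_of_le_of_lt h1 hb.2
          exact (Nat.pow_lt_pow_iff_right (by omega)).mp h2
        rw [Finset.sum_eq_single (p.maxPowDiv b)]
        · rw [if_pos hbd.symm, mul_one]
        · intro k _ hk
          rw [if_neg, mul_zero]
          intro hkb
          rw [hbd] at hkb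
          exact hk (key_inj hp ha ha hkb).1
        · intro h; exact absurd hvN (by simpa using h)
      · rw [if_neg hab]
        symm
        apply Finset.sum_eq_zero
        intro k _
        rw [if_neg, mul_zero]
        intro hkb
        apply hab
        rw [← hkb]
        exact ordCompl_pow_mul hp ha k
    rw [key]
    ring


lemma mem_gg (hp : 2 ≤ p) {t : Multiset ℕ} (ht : ∀ b ∈ t, 0 < b) {y : ℕ} (hy : y ∈ gg p t) :
    0 < y := by
  rw [gg] at hy
  rw [Multiset.mem_sum] at hy
  obtain ⟨a, ha, hy⟩ := hy
  rw [Multiset.mem_sum] at hy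
  obtain ⟨k, _, hy⟩ := hy
  rw [Multiset.eq_of_mem_replicate hy]
  have ha0 : 0 < a := ht a (Multiset.mem_toFinset.mp ha)
  exact Nat.mul_pos ha0 (pow_pos (show 0 < p by omega) k)

lemma count_gg (hp : 2 ≤ p) {t : Multiset ℕ} (ht : ∀ b ∈ t, ¬ p ∣ b) {a : ℕ} (ha : ¬ p ∣ a)
    (k : ℕ) : (gg p t).count (p ^ k * a) = t.count a / p ^ k % p := by
  rw [gg, Multiset.count_sum']
  by_cases hmem : a ∈ t.toFinset
  · rw [Finset.sum_eq_single a]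
    · rw [Multiset.count_sum']
      simp only [Multiset.count_replicate]
      have hm : 0 < t.count a := Multiset.count_pos.mpr (Multiset.mem_toFinset.mp hmem)
      by_cases hk : k < t.count a
      · rw [Finset.sum_eq_single k]
        · rw [if_pos (by ring)]
        · intro j _ hj
          rw [if_neg]
          intro h
          rw [mul_comm a (p ^ j)] at h
          exact hj (key_inj hp ha ha h).1
        · intro h; exact absurd hk (by simpa using h)
      · push_neg at hk
        have h1 : t.count a < p ^ k :=
          lt_of_lt_of_le (Nat.lt_pow_self (by omega : 1 < p)) (Nat.pow_le_pow_right (by omega) hk)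
        rw [Nat.div_eq_of_lt h1, Nat.zero_mod]
        apply Finset.sum_eq_zero
        intro j hj
        rw [if_neg]
        intro h
        rw [mul_comm a (p ^ j)] at h
        have := (key_inj hp ha ha h).1
        simp only [Finset.mem_range] at hj
        omega
    · intro a' ha' hne
      rw [Multiset.count_sum']
      apply Finset.sum_eq_zero
      intro j _
      rw [Multiset.count_replicate, if_neg]
      intro h
      rw [mul_comm a' (p ^ j)] at h
      exact hne (key_inj hp (ht a' (Multiset.mem_toFinset.mp ha')) ha h).2
    · intro h; exact absurd hmem h
  · have hm : t.count a = 0 := by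
      rw [Multiset.count_eq_zero]
      intro h; exact hmem (Multiset.mem_toFinset.mpr h)
    rw [hm, Nat.zero_div, Nat.zero_mod]
    apply Finset.sum_eq_zero
    intro a' ha'
    rw [Multiset.count_sum']
    apply Finset.sum_eq_zero
    intro j _
    rw [Multiset.count_replicate, if_neg]
    intro h
    rw [mul_comm a' (p ^ j)] at h
    have := (key_inj hp (ht a' (Multiset.mem_toFinset.mp ha')) ha h).2
    subst this
    exact hmem ha'

lemma count_gg_lt (hp : 2 ≤ p) {t : Multiset ℕ} (ht : ∀ b ∈ t, 0 < b ∧ ¬ p ∣ b) (y : ℕ) :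
    (gg p t).count y < p := by
  rcases Nat.eq_zero_or_pos y with h0 | h0
  · subst h0
    rw [Multiset.count_eq_zero.mpr]
    · omega
    · intro h
      exact absurd (mem_gg hp (fun b hb => (ht b hb).1) h) (by omega)
  · obtain ⟨k, a, ha, rfl⟩ := exists_decomp hp h0
    rw [count_gg hp (fun b hb => (ht b hb).2) ha k]
    exact Nat.mod_lt _ (by omega)

lemma msum_finsum {β : Type*} (s : Finset β) (f : β → Multiset ℕ) :
    (∑ x ∈ s, f x).sum = ∑ x ∈ s, (f x).sum :=
  map_sum Multiset.sumAddMonoidHom f s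

lemma sum_gg (hp : 2 ≤ p) (t : Multiset ℕ) : (gg p t).sum = t.sum := by
  rw [gg, msum_finsum]
  have inner : ∀ a : ℕ, (∑ k ∈ range (t.count a),
      Multiset.replicate (t.count a / p ^ k % p) (a * p ^ k)).sum = t.count a * a := by
    intro a
    rw [msum_finsum]
    have h1 : ∀ k, (Multiset.replicate (t.count a / p ^ k % p) (a * p ^ k)).sum
        = a * ((t.count a / p ^ k % p) * p ^ k) := by
      intro k
      rw [Multiset.sum_replicate, smul_eq_mul]; ring
    rw [Finset.sum_congr rfl (fun k _ => h1 k), ← Finset.mul_sum, sum_digit_mod,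
      Nat.mod_eq_of_lt (Nat.lt_pow_self (by omega : 1 < p)), mul_comm]
  rw [Finset.sum_congr rfl (fun a _ => inner a)]
  conv_rhs => rw [← Multiset.toFinset_sum_count_nsmul_eq t]
  rw [msum_finsum]
  refine Finset.sum_congr rfl fun a _ => ?_
  rw [Multiset.nsmul_singleton, Multiset.sum_replicate, smul_eq_mul]


lemma card_le_sum {t : Multiset ℕ} (ht : ∀ b ∈ t, 0 < b) : Multiset.card t ≤ t.sum := by
  induction t using Multiset.induction with
  | empty => simp
  | cons b s ih =>
    have hb := ht b (Multiset.mem_cons_self b s)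
    have := ih (fun x hx => ht x (Multiset.mem_cons_of_mem hx))
    simp only [Multiset.card_cons, Multiset.sum_cons]
    omega

lemma sum_lt_pow (hp : 2 ≤ p) (m : ℕ) : m < p ^ (m + 1) :=
  lt_of_lt_of_le (Nat.lt_two_pow_self : m < 2 ^ m)
    (le_trans (Nat.pow_le_pow_right (by omega) (Nat.le_succ m)) (Nat.pow_le_pow_left hp (m + 1)))

lemma gg_gf_eq (hp : 2 ≤ p) (s : Multiset ℕ) (hpos : ∀ b ∈ s, 0 < b)
    (hcnt : ∀ b, s.count b < p) : gg p (gf p s) = s := by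
  set N := s.sum + 1 with hN
  have hsN : ∀ b ∈ s, 0 < b ∧ b < p ^ N := by
    intro b hb
    refine ⟨hpos b hb, ?_⟩
    have h1 : b ≤ s.sum := Multiset.single_le_sum (fun x _ => Nat.zero_le x) b hb
    exact lt_of_le_of_lt h1 (sum_lt_pow hp s.sum)
  have hgfpos : ∀ b ∈ gf p s, 0 < b := fun b hb => (mem_gf hp hpos hb).1
  have hgfnd : ∀ b ∈ gf p s, ¬ p ∣ b := fun b hb => (mem_gf hp hpos hb).2
  ext y
  rcases Nat.eq_zero_or_pos y with h0 | h0
  · subst h0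
    rw [Multiset.count_eq_zero.mpr (fun h => absurd (mem_gg hp hgfpos h) (by omega)),
      Multiset.count_eq_zero.mpr (fun h => absurd (hpos 0 h) (by omega))]
  · obtain ⟨k, a, ha, rfl⟩ := exists_decomp hp h0
    rw [count_gg hp hgfnd ha k, count_gf hp ha s N hsN]
    have hsum : ∑ j ∈ range N, p ^ j * s.count (p ^ j * a)
        = ∑ j ∈ range N, s.count (p ^ j * a) * p ^ j :=
      Finset.sum_congr rfl fun j _ => mul_comm _ _
    rw [hsum]
    exact digit_extract hp (fun j => s.count (p ^ j * a)) (fun j => hcnt _) N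
      (fun j hj => by
        rw [Multiset.count_eq_zero]
        intro hmem
        have h1 : p ^ j * a ≤ s.sum := Multiset.single_le_sum (fun x _ => Nat.zero_le x) _ hmem
        have ha0 : 0 < a := Nat.pos_of_ne_zero (fun h => ha (h ▸ dvd_zero p))
        have h2 : p ^ N ≤ p ^ j := Nat.pow_le_pow_right (by omega) hj
        have h3 : p ^ j ≤ p ^ j * a := Nat.le_mul_of_pos_right _ ha0
        have h4 : s.sum < p ^ N := by rw [hN]; exact sum_lt_pow hp s.sum
        omega) k

lemma gf_gg_eq (hp : 2 ≤ p) (t : Multiset ℕ) (ht : ∀ b ∈ t, 0 < b ∧ ¬ p ∣ b) :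
    gf p (gg p t) = t := by
  have hggpos : ∀ b ∈ gg p t, 0 < b := fun b hb => mem_gg hp (fun x hx => (ht x hx).1) hb
  set N := t.sum + 1 with hN
  have hggN : ∀ b ∈ gg p t, 0 < b ∧ b < p ^ N := by
    intro b hb
    refine ⟨hggpos b hb, ?_⟩
    have h1 : b ≤ (gg p t).sum := Multiset.single_le_sum (fun x _ => Nat.zero_le x) b hb
    rw [sum_gg hp] at h1
    exact lt_of_le_of_lt h1 (sum_lt_pow hp t.sum)
  ext y
  rcases Nat.eq_zero_or_pos y with h0 | h0
  · subst h0
    rw [Multiset.count_eq_zero.mpr (fun h => absurd ((mem_gf hp hggpos h).1) (by omega)),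
      Multiset.count_eq_zero.mpr (fun h => absurd ((ht 0 h).1) (by omega))]
  · by_cases hpy : p ∣ y
    · rw [Multiset.count_eq_zero.mpr (fun h => absurd hpy (mem_gf hp hggpos h).2),
        Multiset.count_eq_zero.mpr (fun h => absurd hpy (ht y h).2)]
    · rw [count_gf hp hpy (gg p t) N hggN]
      have hterm : ∀ k, (gg p t).count (p ^ k * y) = t.count y / p ^ k % p :=
        fun k => count_gg hp (fun b hb => (ht b hb).2) hpy k
      have : ∑ k ∈ range N, p ^ k * (gg p t).count (p ^ k * y)
          = ∑ k ∈ range N, t.count y / p ^ k % p * p ^ k :=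
        Finset.sum_congr rfl fun k _ => by rw [hterm k, mul_comm]
      rw [this, sum_digit_mod]
      apply Nat.mod_eq_of_lt
      have h1 : t.count y ≤ Multiset.card t := Multiset.count_le_card y t
      have h2 := card_le_sum (fun b hb => (ht b hb).1)
      have h3 : t.sum < p ^ N := by rw [hN]; exact sum_lt_pow hp t.sum
      omega

end GlaisherAux

open GlaisherAux in
/-- The number of partitions of `n` in which no part has multiplicity `p` or more
equals the number of partitions of `n` into parts not divisible by `p`. -/
theorem partitions_mult_lt_card_eq_not_dvd_card (n p : ℕ) (hp : 2 ≤ p) :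
    Nat.card {μ : n.Partition // ∀ i ∈ μ.parts, μ.parts.count i < p} =
      Nat.card {μ : n.Partition // ∀ i ∈ μ.parts, ¬ p ∣ i} := by
  apply Nat.card_congr
  refine ⟨fun μ => ⟨⟨gf p μ.1.parts, ?_, ?_⟩, ?_⟩, fun μ => ⟨⟨gg p μ.1.parts, ?_, ?_⟩, ?_⟩, ?_, ?_⟩
  · exact fun {i} hi => (mem_gf hp (fun b hb => μ.1.parts_pos hb) hi).1
  · rw [sum_gf]; exact μ.1.parts_sum
  · exact fun i hi => (mem_gf hp (fun b hb => μ.1.parts_pos hb) hi).2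
  · exact fun {i} hi => mem_gg hp (fun b hb => μ.1.parts_pos hb) hi
  · rw [sum_gg hp]; exact μ.1.parts_sum
  · exact fun i hi => count_gg_lt hp (fun b hb => ⟨μ.1.parts_pos hb, μ.2 b hb⟩) i
  · intro μ
    refine Subtype.ext (Nat.Partition.ext ?_)
    refine gg_gf_eq hp μ.1.parts (fun b hb => μ.1.parts_pos hb) ?_
    intro b
    by_cases hb : b ∈ μ.1.parts
    · exact μ.2 b hb
    · rw [Multiset.count_eq_zero.mpr hb]; omega
  · intro μ
    exact Subtype.ext (Nat.Partition.ext
      (gf_gg_eq hp μ.1.parts (fun b hb => ⟨μ.1.parts_pos hb, μ.2 b hb⟩)))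
end

section
/- For subgroups H, K of a finite group G, the index [N_G(H):H] divides the number of fixed points |Fix_{G/H}(K)| of K acting on the coset space G/H. -/
open MulAction Subgroup

namespace RelindexFixAux

variable {G : Type*} [Group G] {H K : Subgroup G}

private def actFun (H : Subgroup G) (n : (Subgroup.normalizer (H : Set G))) : G ⧸ H → G ⧸ H :=
  Quotient.map' (fun x => x * (n : G)⁻¹) (by
    intro x y hxy
    rw [QuotientGroup.leftRel_apply] at hxy ⊢
    have : (x * (n : G)⁻¹)⁻¹ * (y * (n : G)⁻¹) = (n : G) * (x⁻¹ * y) * (n : G)⁻¹ := by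
      group
    rw [this]
    exact (Subgroup.mem_normalizer_iff.mp n.2 _).mp hxy)

private lemma actFun_mk (H : Subgroup G) (n : (Subgroup.normalizer (H : Set G))) (x : G) :
    actFun H n (QuotientGroup.mk x) = QuotientGroup.mk (x * (n : G)⁻¹) := rfl

private lemma actFun_mem (n : (Subgroup.normalizer (H : Set G))) {q : G ⧸ H}
    (hq : q ∈ MulAction.fixedPoints K (G ⧸ H)) :
    actFun H n q ∈ MulAction.fixedPoints K (G ⧸ H) := by
  intro k
  induction q using QuotientGroup.induction_on with
  | H x =>
    have hk := hq k
    change ((k : G) • (QuotientGroup.mk x : G ⧸ H)) = _ at hk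
    rw [MulAction.Quotient.smul_mk, QuotientGroup.eq] at hk
    rw [actFun_mk]
    change ((k : G) • (QuotientGroup.mk (x * (n : G)⁻¹) : G ⧸ H)) = _
    rw [MulAction.Quotient.smul_mk, QuotientGroup.eq]
    rw [smul_eq_mul] at hk ⊢
    have : ((k : G) * (x * (n : G)⁻¹))⁻¹ * (x * (n : G)⁻¹) =
        (n : G) * (((k : G) * x)⁻¹ * x) * (n : G)⁻¹ := by group
    rw [this]
    exact (Subgroup.mem_normalizer_iff.mp n.2 _).mp hk

private instance instSMul : SMul (Subgroup.normalizer (H : Set G)) (MulAction.fixedPoints K (G ⧸ H)) :=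
  ⟨fun n q => ⟨actFun H n q.1, actFun_mem n q.2⟩⟩

private lemma smul_coe (n : (Subgroup.normalizer (H : Set G))) (q : MulAction.fixedPoints K (G ⧸ H)) :
    ((n • q : MulAction.fixedPoints K (G ⧸ H)) : G ⧸ H) = actFun H n q.1 := rfl

private instance instMulAction : MulAction (Subgroup.normalizer (H : Set G)) (MulAction.fixedPoints K (G ⧸ H)) where
  one_smul q := by
    ext
    rw [smul_coe]
    induction (q : G ⧸ H) using QuotientGroup.induction_on with
    | H x => simp [actFun_mk]
  mul_smul m n q := by
    ext
    rw [smul_coe, smul_coe, smul_coe]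
    induction (q : G ⧸ H) using QuotientGroup.induction_on with
    | H x => simp [actFun_mk, mul_assoc]

private lemma stabilizer_eq (q : MulAction.fixedPoints K (G ⧸ H)) :
    MulAction.stabilizer (Subgroup.normalizer (H : Set G)) q = H.subgroupOf (Subgroup.normalizer (H : Set G)) := by
  ext n
  simp only [MulAction.mem_stabilizer_iff, Subgroup.mem_subgroupOf]
  constructor
  · intro h
    have : actFun H n q.1 = q.1 := congrArg Subtype.val h
    obtain ⟨x, hx⟩ := QuotientGroup.mk_surjective q.1
    rw [← hx, actFun_mk, QuotientGroup.eq] at this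
    have h2 : (x * (n : G)⁻¹)⁻¹ * x = (n : G) := by group
    rw [h2] at this
    exact this
  · intro h
    ext
    obtain ⟨x, hx⟩ := QuotientGroup.mk_surjective q.1
    rw [smul_coe, ← hx, actFun_mk, QuotientGroup.eq]
    have h2 : (x * (n : G)⁻¹)⁻¹ * x = (n : G) := by group
    rw [h2]
    exact h

private lemma key (G : Type*) [Group G] [Finite G] (H K : Subgroup G) :
    H.relIndex (Subgroup.normalizer (H : Set G)) ∣ Nat.card (MulAction.fixedPoints K (G ⧸ H)) := by
  classical
  have e := MulAction.selfEquivSigmaOrbitsQuotientStabilizer (Subgroup.normalizer (H : Set G))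
    (MulAction.fixedPoints K (G ⧸ H))
  letI : Fintype (MulAction.fixedPoints K (G ⧸ H)) := Fintype.ofFinite _
  letI : Fintype (Quotient (MulAction.orbitRel (Subgroup.normalizer (H : Set G)) (MulAction.fixedPoints K (G ⧸ H)))) :=
    Fintype.ofFinite _
  letI : ∀ ω : Quotient (MulAction.orbitRel (Subgroup.normalizer (H : Set G)) (MulAction.fixedPoints K (G ⧸ H))),
      Fintype ((Subgroup.normalizer (H : Set G)) ⧸ MulAction.stabilizer (Subgroup.normalizer (H : Set G)) ω.out) :=
    fun ω => Fintype.ofFinite _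
  rw [Nat.card_eq_fintype_card, Fintype.card_congr e, Fintype.card_sigma]
  have hω : ∀ ω : Quotient (MulAction.orbitRel (Subgroup.normalizer (H : Set G)) (MulAction.fixedPoints K (G ⧸ H))),
      Fintype.card ((Subgroup.normalizer (H : Set G)) ⧸ MulAction.stabilizer (Subgroup.normalizer (H : Set G)) ω.out) =
        H.relIndex (Subgroup.normalizer (H : Set G)) := by
    intro ω
    rw [← Nat.card_eq_fintype_card, stabilizer_eq]
    rfl
  exact Finset.dvd_sum fun ω _ => (hω ω).symm ▸ dvd_refl _

end RelindexFixAux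

/-- For subgroups `H`, `K` of a finite group `G`, the index `[N_G(H) : H]` divides the
number of fixed points of `K` acting on the coset space `G ⧸ H`. -/
theorem relindex_normalizer_dvd_card_fixedPoints
    (G : Type*) [Group G] [Fintype G] (H K : Subgroup G) :
    H.relIndex (Subgroup.normalizer (H : Set G)) ∣ Nat.card (MulAction.fixedPoints K (G ⧸ H)) :=
  RelindexFixAux.key G H K
end

section
/- Two finite G-sets X and Y are isomorphic as G-sets if and only if for every subgroup H ≤ G the number of points of X fixed by H equals the number of points of Y fixed by H. -/
open MulAction

section Aux

variable {G : Type*} [Group G]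

/-- transport of fixed-point cardinalities along an equivariant equiv -/
theorem gset_fix_card_eq {X Y : Type*} [MulAction G X] [MulAction G Y]
    (e : X ≃ Y) (he : ∀ (g : G) (x : X), e (g • x) = g • e x) (H : Subgroup G) :
    Nat.card (fixedPoints H X) = Nat.card (fixedPoints H Y) := by
  refine Nat.card_congr (Equiv.subtypeEquiv e fun x => ?_)
  constructor
  · intro hx h
    have h1 := hx h
    rw [Subgroup.smul_def] at h1 ⊢
    rw [← he, h1]
  · intro hx h
    have h1 := hx h
    rw [Subgroup.smul_def] at h1 ⊢
    rw [← he] at h1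
    exact e.injective h1

theorem gset_card_fix_bot (X : Type*) [MulAction G X] :
    Nat.card (fixedPoints (⊥ : Subgroup G) X) = Nat.card X := by
  refine Nat.card_congr (Equiv.subtypeUnivEquiv fun x => ?_)
  rintro ⟨g, hg⟩
  rw [Subgroup.mem_bot] at hg
  subst hg
  rw [Subgroup.smul_def]
  exact one_smul _ _

/-- the complement of a sub-action is a sub-action -/
def gsetCompl {X : Type*} [MulAction G X] (S : SubMulAction G X) : SubMulAction G X :=
  ⟨S.carrierᶜ, fun g {z} hz h => hz (by
    have := S.smul_mem' g⁻¹ h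
    rwa [inv_smul_smul] at this)⟩

/-- the orbit of a point as a sub-action -/
def gsetOrbit {X : Type*} [MulAction G X] (x : X) : SubMulAction G X :=
  ⟨orbit G x, fun g {z} hz => by
    obtain ⟨a, rfl⟩ := hz
    rw [← mul_smul]
    exact mem_orbit x _⟩

def gsetFixSubEquiv {X : Type*} [MulAction G X] (S : SubMulAction G X) (H : Subgroup G) :
    fixedPoints H ↥S ≃ {a : X // a ∈ S.carrier ∧ a ∈ fixedPoints H X} := by
  refine ⟨fun z => ⟨z.val.val, z.val.prop, fun h => ?_⟩,
    fun a => ⟨⟨a.val, a.prop.1⟩, fun h => Subtype.ext (a.prop.2 h)⟩, fun z => rfl, fun a => rfl⟩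
  have h1 := z.prop h
  have h2 : (h • z.val).val = h • z.val.val := rfl
  rw [← h2, h1]

theorem gset_card_fix_split {X : Type*} [MulAction G X] [Finite X]
    (S : SubMulAction G X) (H : Subgroup G) :
    Nat.card (fixedPoints H X) =
      Nat.card (fixedPoints H ↥S) + Nat.card (fixedPoints H ↥(gsetCompl S)) := by
  classical
  rw [Nat.card_congr (gsetFixSubEquiv S H), Nat.card_congr (gsetFixSubEquiv (gsetCompl S) H)]
  rw [Nat.card_congr (Equiv.sumCompl (fun z : fixedPoints H X => (z : X) ∈ S.carrier)).symm,
    Nat.card_sum]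
  congr 1
  · exact Nat.card_congr ((Equiv.subtypeSubtypeEquivSubtypeInter
      (· ∈ fixedPoints H X) (· ∈ S.carrier)).trans
      (Equiv.subtypeEquivRight fun a => and_comm))
  · exact Nat.card_congr ((Equiv.subtypeSubtypeEquivSubtypeInter
      (· ∈ fixedPoints H X) (· ∉ S.carrier)).trans
      (Equiv.subtypeEquivRight fun a => and_comm))

theorem gset_stab_eq_of_max {X : Type*} [MulAction G X] [Finite G] [Finite X] {H : Subgroup G}
    (hmax : ∀ K : Subgroup G, Nat.card (fixedPoints K X) ≠ 0 → Nat.card K ≤ Nat.card H)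
    {x : X} (hx : x ∈ fixedPoints H X) : stabilizer G x = H := by
  have h1 : H ≤ stabilizer G x := by
    intro g hg
    have := hx ⟨g, hg⟩
    rwa [Subgroup.smul_def] at this
  have h2 : x ∈ fixedPoints (stabilizer G x) X := fun h => h.2
  have h3 : Nat.card (fixedPoints (stabilizer G x) X) ≠ 0 :=
    Nat.card_ne_zero.mpr ⟨⟨x, h2⟩, inferInstance⟩
  have h4 := hmax _ h3
  have h5 : (H : Set G) ⊆ (stabilizer G x : Set G) := h1
  have hc : ∀ K : Subgroup G, Nat.card K = (K : Set G).ncard := fun K => by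
    rw [← Nat.card_coe_set_eq]
    rfl
  refine SetLike.coe_injective (Set.eq_of_subset_of_ncard_le h5 ?_ (Set.toFinite _)).symm
  rw [← hc, ← hc]
  exact h4

end Aux

universe u v

theorem gset_main {G : Type*} [Group G] [Finite G] :
    ∀ (n : ℕ) (X : Type u) (Y : Type v) [MulAction G X] [MulAction G Y] [Finite X] [Finite Y],
      Nat.card X = n →
      (∀ H : Subgroup G, Nat.card (fixedPoints H X) = Nat.card (fixedPoints H Y)) →
      ∃ e : X ≃ Y, ∀ (g : G) (x : X), e (g • x) = g • e x := by
  intro n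
  induction n using Nat.strong_induction_on with
  | _ n IH =>
  intro X Y _ _ _ _ hn hfix
  classical
  rcases eq_or_ne n 0 with rfl | hn0
  · have hX : IsEmpty X := by
      rw [← not_nonempty_iff]
      intro h
      have := Nat.card_pos (α := X)
      omega
    have hYcard : Nat.card Y = 0 := by
      rw [← gset_card_fix_bot (G := G) Y, ← hfix ⊥, gset_card_fix_bot]
      exact hn
    have hY : IsEmpty Y := by
      rw [← not_nonempty_iff]
      intro h
      have := Nat.card_pos (α := Y)
      omega
    exact ⟨Equiv.equivOfIsEmpty X Y, fun g x => (hX.false x).elim⟩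
  · -- nonempty case
    have hXpos : 0 < Nat.card X := by omega
    haveI := Fintype.ofFinite (Subgroup G)
    obtain ⟨H, hHmem, hHmax⟩ := Finset.exists_max_image
      (Finset.univ.filter fun K : Subgroup G => Nat.card (fixedPoints K X) ≠ 0)
      (fun K => Nat.card K)
      ⟨⊥, Finset.mem_filter.mpr ⟨Finset.mem_univ _, by rw [gset_card_fix_bot]; omega⟩⟩
    have hmaxX : ∀ K : Subgroup G, Nat.card (fixedPoints K X) ≠ 0 →
        Nat.card K ≤ Nat.card H := fun K hK =>
      hHmax K (Finset.mem_filter.mpr ⟨Finset.mem_univ _, hK⟩)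
    have hHfixX : Nat.card (fixedPoints H X) ≠ 0 := (Finset.mem_filter.mp hHmem).2
    have hmaxY : ∀ K : Subgroup G, Nat.card (fixedPoints K Y) ≠ 0 →
        Nat.card K ≤ Nat.card H := fun K hK => hmaxX K (by rw [hfix K]; exact hK)
    have hHfixY : Nat.card (fixedPoints H Y) ≠ 0 := by rw [← hfix H]; exact hHfixX
    obtain ⟨⟨x, hx⟩⟩ := (Nat.card_ne_zero.mp hHfixX).1
    obtain ⟨⟨y, hy⟩⟩ := (Nat.card_ne_zero.mp hHfixY).1
    have hstabx : stabilizer G x = H := gset_stab_eq_of_max hmaxX hx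
    have hstaby : stabilizer G y = H := gset_stab_eq_of_max hmaxY hy
    have tX : ∀ g g' : G, g • x = g' • x ↔ g'⁻¹ * g ∈ H := fun g g' => by
      rw [← hstabx, mem_stabilizer_iff, mul_smul, inv_smul_eq_iff]
    have tY : ∀ g g' : G, g • y = g' • y ↔ g'⁻¹ * g ∈ H := fun g g' => by
      rw [← hstaby, mem_stabilizer_iff, mul_smul, inv_smul_eq_iff]
    have key : ∀ g g' : G, g • x = g' • x ↔ g • y = g' • y := fun g g' =>
      (tX g g').trans (tY g g').symm
    set SX := gsetOrbit (G := G) x with hSX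
    set SY := gsetOrbit (G := G) y with hSY
    have memX : ∀ z : ↥SX, (z : X) ∈ orbit G x := fun z => z.prop
    let cg : ↥SX → G := fun z => (mem_orbit_iff.mp (memX z)).choose
    have cgs : ∀ z : ↥SX, cg z • x = (z : X) := fun z =>
      (mem_orbit_iff.mp (memX z)).choose_spec
    let f : ↥SX → ↥SY := fun z => ⟨cg z • y, mem_orbit y (cg z)⟩
    have finj : Function.Injective f := by
      intro z1 z2 hz
      have h1 : cg z1 • y = cg z2 • y := congrArg Subtype.val hz
      have h2 : cg z1 • x = cg z2 • x := (key _ _).mpr h1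
      rw [cgs z1, cgs z2] at h2
      exact Subtype.ext h2
    have fsurj : Function.Surjective f := by
      intro w
      obtain ⟨g, hg⟩ := mem_orbit_iff.mp (w.prop : (w : Y) ∈ orbit G y)
      refine ⟨⟨g • x, mem_orbit x g⟩, Subtype.ext ?_⟩
      show cg _ • y = (w : Y)
      rw [← hg]
      refine (key _ _).mp ?_
      exact cgs _
    let fe : ↥SX ≃ ↥SY := Equiv.ofBijective f ⟨finj, fsurj⟩
    have fequiv : ∀ (g : G) (z : ↥SX), fe (g • z) = g • fe z := by
      intro g z
      refine Subtype.ext ?_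
      show cg (g • z) • y = g • (cg z • y)
      rw [← mul_smul]
      refine (key _ _).mp ?_
      rw [mul_smul, cgs (g • z), cgs z]
      rfl
    have hOrb : ∀ K : Subgroup G,
        Nat.card (fixedPoints K ↥SX) = Nat.card (fixedPoints K ↥SY) :=
      gset_fix_card_eq fe fequiv
    have hfix' : ∀ K : Subgroup G,
        Nat.card (fixedPoints K ↥(gsetCompl SX)) = Nat.card (fixedPoints K ↥(gsetCompl SY)) := by
      intro K
      have h1 := hfix K
      rw [gset_card_fix_split SX K, gset_card_fix_split SY K, hOrb K] at h1
      omega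
    have hb := gset_card_fix_split (G := G) SX (⊥ : Subgroup G)
    rw [gset_card_fix_bot, gset_card_fix_bot, gset_card_fix_bot] at hb
    have hSXpos : 0 < Nat.card ↥SX :=
      Nat.card_pos_iff.mpr ⟨⟨⟨x, mem_orbit_self x⟩⟩, inferInstance⟩
    have hlt : Nat.card ↥(gsetCompl SX) < n := by omega
    obtain ⟨e', he'⟩ := IH _ hlt ↥(gsetCompl SX) ↥(gsetCompl SY) rfl hfix'
    -- assemble
    let F : X → Y := fun z =>
      if h : z ∈ orbit G x then (fe ⟨z, h⟩ : ↥SY).val else (e' ⟨z, h⟩ : ↥(gsetCompl SY)).val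
    have hF1 : ∀ (z : X) (h : z ∈ orbit G x), F z = (fe ⟨z, h⟩ : ↥SY).val := fun z h => dif_pos h
    have hF2 : ∀ (z : X) (h : ¬ z ∈ orbit G x), F z = (e' ⟨z, h⟩ : ↥(gsetCompl SY)).val :=
      fun z h => dif_neg h
    have hFmem1 : ∀ (z : X) (h : z ∈ orbit G x), F z ∈ orbit G y := fun z h => by
      rw [hF1 z h]; exact (fe ⟨z, h⟩).prop
    have hFmem2 : ∀ (z : X) (h : ¬ z ∈ orbit G x), ¬ F z ∈ orbit G y := fun z h => by
      rw [hF2 z h]; exact (e' ⟨z, h⟩).prop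
    have Finj : Function.Injective F := by
      intro z1 z2 hz
      by_cases h1 : z1 ∈ orbit G x <;> by_cases h2 : z2 ∈ orbit G x
      · rw [hF1 z1 h1, hF1 z2 h2] at hz
        have := finj (fe.injective (Subtype.ext hz) ▸ rfl : fe ⟨z1, h1⟩ = fe ⟨z1, h1⟩)
        have h3 : (⟨z1, h1⟩ : ↥SX) = ⟨z2, h2⟩ := fe.injective (Subtype.ext hz)
        exact congrArg Subtype.val h3
      · exact absurd (hz ▸ hFmem1 z1 h1) (hFmem2 z2 h2)
      · exact absurd (hz ▸ hFmem2 z1 h1) (fun hh => hh (hFmem1 z2 h2))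
      · rw [hF2 z1 h1, hF2 z2 h2] at hz
        have h3 : (⟨z1, h1⟩ : ↥(gsetCompl SX)) = ⟨z2, h2⟩ := e'.injective (Subtype.ext hz)
        exact congrArg Subtype.val h3
    have Fsurj : Function.Surjective F := by
      intro w
      by_cases hw : w ∈ orbit G y
      · refine ⟨(fe.symm ⟨w, hw⟩ : ↥SX).val, ?_⟩
        rw [hF1 _ (fe.symm ⟨w, hw⟩).prop]
        have : (⟨(fe.symm ⟨w, hw⟩ : ↥SX).val, (fe.symm ⟨w, hw⟩).prop⟩ : ↥SX) = fe.symm ⟨w, hw⟩ :=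
          Subtype.ext rfl
        rw [this, fe.apply_symm_apply]
      · refine ⟨(e'.symm ⟨w, hw⟩ : ↥(gsetCompl SX)).val, ?_⟩
        rw [hF2 _ (e'.symm ⟨w, hw⟩).prop]
        have : (⟨(e'.symm ⟨w, hw⟩ : ↥(gsetCompl SX)).val, (e'.symm ⟨w, hw⟩).prop⟩ :
            ↥(gsetCompl SX)) = e'.symm ⟨w, hw⟩ := Subtype.ext rfl
        rw [this, e'.apply_symm_apply]
    have Fequiv : ∀ (g : G) (z : X), F (g • z) = g • F z := by
      intro g z
      by_cases h : z ∈ orbit G x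
      · have hg : g • z ∈ orbit G x := SX.smul_mem' g h
        rw [hF1 _ hg, hF1 z h]
        have h2 : (⟨g • z, hg⟩ : ↥SX) = g • (⟨z, h⟩ : ↥SX) := Subtype.ext rfl
        rw [h2, fequiv]
        rfl
      · have hg : ¬ g • z ∈ orbit G x := fun hh => h (by
          have := SX.smul_mem' g⁻¹ hh
          rwa [inv_smul_smul] at this)
        rw [hF2 _ hg, hF2 z h]
        have h2 : (⟨g • z, hg⟩ : ↥(gsetCompl SX)) = g • (⟨z, h⟩ : ↥(gsetCompl SX)) :=
          Subtype.ext rfl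
        rw [h2, he']
        rfl
    exact ⟨Equiv.ofBijective F ⟨Finj, Fsurj⟩, Fequiv⟩

/-- Two finite `G`-sets `X` and `Y` are isomorphic as `G`-sets if and only if for every
subgroup `H ≤ G` the number of points of `X` fixed by `H` equals the number of points of
`Y` fixed by `H`. -/
theorem gset_iso_iff_card_fixedPoints_eq
    (G : Type*) [Group G] [Finite G]
    (X Y : Type*) [MulAction G X] [MulAction G Y] [Finite X] [Finite Y] :
    (∃ e : X ≃ Y, ∀ (g : G) (x : X), e (g • x) = g • e x) ↔
      ∀ H : Subgroup G,
        Nat.card (MulAction.fixedPoints H X) = Nat.card (MulAction.fixedPoints H Y) := by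
  constructor
  · rintro ⟨e, he⟩ H
    exact gset_fix_card_eq e he H
  · intro hfix
    exact gset_main (Nat.card X) X Y rfl hfix
end

section
/- Let K be a subset of the simple transpositions of S_n whose associated composition of n has a_i parts equal to i for each i. Then the index of the standard parabolic subgroup W_K in its normalizer in S_n equals a_1! · a_2! · ⋯ · a_n!. -/
set_option linter.unusedSectionVars false
set_option maxHeartbeats 1000000

open Equiv MulAction



variable {α : Type*} [Fintype α] [DecidableEq α]

lemma perm_apply_inv_self' {β : Type*} (f : Perm β) (y : β) : f (f⁻¹ y) = y := f.apply_symm_apply y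
lemma perm_inv_apply_self' {β : Type*} (f : Perm β) (y : β) : f⁻¹ (f y) = y := f.symm_apply_apply y


/-- Transitivity of "the swap is in the subgroup". -/
lemma swap_trans_mem (C : Subgroup (Perm α)) {x y z : α}
    (h1 : Equiv.swap x y ∈ C) (h2 : Equiv.swap y z ∈ C) (hxz : x ≠ z) :
    Equiv.swap x z ∈ C := by
  by_cases hxy : x = y
  · subst hxy; exact h2
  by_cases hzy : z = y
  · subst hzy; exact h1
  have key : Equiv.swap x z = Equiv.swap y z * Equiv.swap x y * (Equiv.swap y z)⁻¹ := by
    rw [← Equiv.swap_apply_apply]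
    rw [Equiv.swap_apply_of_ne_of_ne hxy (fun h => hxz h), Equiv.swap_apply_left]
  rw [key]
  exact mul_mem (mul_mem h2 h1) (inv_mem h2)

lemma swap_apply_mem_closure {T : Set (Perm α)} (hT : ∀ t ∈ T, t.IsSwap) :
    ∀ g ∈ Subgroup.closure T, ∀ x : α,
      g x = x ∨ Equiv.swap x (g x) ∈ Subgroup.closure T := by
  intro g hg
  induction hg using Subgroup.closure_induction with
  | mem t ht =>
    obtain ⟨a, b, hab, rfl⟩ := hT t ht
    intro x
    by_cases hxa : x = a
    · subst hxa
      right
      rw [Equiv.swap_apply_left]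
      exact Subgroup.subset_closure ht
    by_cases hxb : x = b
    · subst hxb
      right
      rw [Equiv.swap_apply_right, Equiv.swap_comm]
      exact Subgroup.subset_closure ht
    · left; exact Equiv.swap_apply_of_ne_of_ne hxa hxb
  | one => intro x; left; rfl
  | mul g h hg hh ihg ihh =>
    intro x
    have hmul : (g * h) x = g (h x) := rfl
    rcases ihh x with h1 | h1
    · rw [hmul, h1]; exact ihg x
    · rcases ihg (h x) with h2 | h2
      · rw [hmul, h2]; right; exact h1
      · by_cases hx : x = g (h x)
        · left; rw [hmul, ← hx]
        · right; rw [hmul]; exact swap_trans_mem _ h1 h2 hx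
  | inv g hg ihg =>
    intro x
    rcases ihg (g⁻¹ x) with h | h
    · rw [perm_apply_inv_self'] at h
      left
      show g⁻¹ x = x
      exact h.symm
    · rw [perm_apply_inv_self'] at h
      right
      rw [Equiv.swap_comm]
      exact h


lemma subgroup_apply_mem_orbit (C : Subgroup (Perm α)) {g : Perm α} (hg : g ∈ C) (x : α) :
    g x ∈ MulAction.orbit C x :=
  ⟨⟨g, hg⟩, rfl⟩

lemma swap_mem_of_mem_orbit {T : Set (Perm α)} (hT : ∀ t ∈ T, t.IsSwap) {x y : α}
    (h : y ∈ MulAction.orbit (Subgroup.closure T) x) (hxy : x ≠ y) :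
    Equiv.swap x y ∈ Subgroup.closure T := by
  obtain ⟨g, rfl⟩ := h
  rcases swap_apply_mem_closure hT g g.2 x with h | h
  · exact absurd (show x = g • x from h.symm) hxy
  · exact h

lemma mem_closure_of_orbit_fix {T : Set (Perm α)} (hT : ∀ t ∈ T, t.IsSwap) (σ : Perm α)
    (h : ∀ x, σ x ∈ MulAction.orbit (Subgroup.closure T) x) : σ ∈ Subgroup.closure T := by
  set C := Subgroup.closure T with hC
  suffices H : ∀ s : Finset α, ∀ σ : Perm α, (∀ x, σ x ≠ x → x ∈ s) →
      (∀ x, σ x ∈ MulAction.orbit C x) → σ ∈ C from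
    H Finset.univ σ (fun x _ => Finset.mem_univ x) h
  intro s
  induction s using Finset.strongInductionOn with
  | _ s ih =>
    intro σ hsupp horb
    by_cases h1 : ∀ x, σ x = x
    · have : σ = 1 := Equiv.ext fun x => h1 x
      rw [this]; exact one_mem C
    · push_neg at h1
      obtain ⟨x, hx⟩ := h1
      have hxs : x ∈ s := hsupp x hx
      have hsw : Equiv.swap x (σ x) ∈ C :=
        swap_mem_of_mem_orbit hT (horb x) (Ne.symm hx)
      set τ := Equiv.swap x (σ x) with hτ
      have hτorb : ∀ z, τ z ∈ MulAction.orbit C z := by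
        intro z
        by_cases hz1 : z = x
        · subst hz1; rw [hτ, Equiv.swap_apply_left]; exact horb z
        by_cases hz2 : z = σ x
        · subst hz2
          rw [hτ, Equiv.swap_apply_right]
          have : MulAction.orbit C (σ x) = MulAction.orbit C x :=
            (MulAction.orbit_eq_iff).2 (horb x)
          rw [this]; exact MulAction.mem_orbit_self x
        · rw [hτ, Equiv.swap_apply_of_ne_of_ne hz1 hz2]
          exact MulAction.mem_orbit_self z
      set σ' := τ * σ with hσ'
      have hσ'x : σ' x = x := by
        rw [hσ', hτ]
        show Equiv.swap x (σ x) (σ x) = x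
        exact Equiv.swap_apply_right _ _
      have hsupp' : ∀ y, σ' y ≠ y → y ∈ s.erase x := by
        intro y hy
        have hyx : y ≠ x := fun hh => hy (by rw [hh, hσ'x])
        have hσy : σ y ≠ y := by
          intro hh
          apply hy
          show τ (σ y) = y
          rw [hh, hτ]
          have hyσx : y ≠ σ x := by
            intro h2
            exact hx (σ.injective (by rw [← h2, hh]))
          exact Equiv.swap_apply_of_ne_of_ne hyx hyσx
        exact Finset.mem_erase.2 ⟨hyx, hsupp y hσy⟩
      have horb' : ∀ y, σ' y ∈ MulAction.orbit C y := by
        intro y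
        have h1 : σ' y = τ (σ y) := rfl
        rw [h1]
        have h2 : τ (σ y) ∈ MulAction.orbit C (σ y) := hτorb (σ y)
        have h3 : MulAction.orbit C (σ y) = MulAction.orbit C y :=
          (MulAction.orbit_eq_iff).2 (horb y)
        rw [h3] at h2; exact h2
      have hmem : σ' ∈ C := ih (s.erase x) (Finset.erase_ssubset hxs) σ' hsupp' horb'
      have : σ = τ * σ' := by
        rw [hσ', ← mul_assoc, hτ, Equiv.swap_mul_self, one_mul]
      rw [this]
      exact mul_mem hsw hmem

lemma normalizer_maps_orbit (C : Subgroup (Perm α)) {σ : Perm α} (hσ : σ ∈ Subgroup.normalizer (C : Set (Perm α)))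
    {x y : α} (h : y ∈ MulAction.orbit C x) : σ y ∈ MulAction.orbit C (σ x) := by
  obtain ⟨g, rfl⟩ := h
  have hg : σ * (g : Perm α) * σ⁻¹ ∈ C :=
    (Subgroup.mem_normalizer_iff.mp hσ (g : Perm α)).1 g.2
  refine ⟨⟨σ * (g : Perm α) * σ⁻¹, hg⟩, ?_⟩
  show (σ * (g : Perm α) * σ⁻¹) (σ x) = σ ((g : Perm α) x)
  simp [Equiv.Perm.mul_apply]

lemma mem_normalizer_of_maps {T : Set (Perm α)} (hT : ∀ t ∈ T, t.IsSwap) {σ : Perm α}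
    (h1 : ∀ x y : α, y ∈ MulAction.orbit (Subgroup.closure T) x →
      σ y ∈ MulAction.orbit (Subgroup.closure T) (σ x))
    (h2 : ∀ x y : α, y ∈ MulAction.orbit (Subgroup.closure T) x →
      σ⁻¹ y ∈ MulAction.orbit (Subgroup.closure T) (σ⁻¹ x)) :
    σ ∈ Subgroup.normalizer ((Subgroup.closure T : Subgroup (Perm α)) : Set (Perm α)) := by
  set C := Subgroup.closure T with hC
  have key : ∀ (τ : Perm α), (∀ x y : α, y ∈ MulAction.orbit C x →
      τ y ∈ MulAction.orbit C (τ x)) → ∀ g ∈ C, τ * g * τ⁻¹ ∈ C := by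
    intro τ hτ g hg
    apply mem_closure_of_orbit_fix hT
    intro x
    have he : (τ * g * τ⁻¹) x = τ (g (τ⁻¹ x)) := rfl
    rw [he]
    have h3 := hτ (τ⁻¹ x) (g (τ⁻¹ x)) (subgroup_apply_mem_orbit C hg _)
    rwa [perm_apply_inv_self'] at h3
  rw [Subgroup.mem_normalizer_iff]
  intro g
  constructor
  · exact fun hg => key σ h1 g hg
  · intro hg
    have hgoal : g = σ⁻¹ * (σ * g * σ⁻¹) * σ⁻¹⁻¹ := by group
    rw [hgoal]
    exact key σ⁻¹ h2 _ hg

/-- The Young (standard parabolic) subgroup of `S_{m+1}` generated by the adjacent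
transpositions `(i, i+1)` for `i ∈ K`. -/
def youngSubgroup (m : ℕ) (K : Finset (Fin m)) : Subgroup (Equiv.Perm (Fin (m + 1))) :=
  Subgroup.closure ((fun i : Fin m => Equiv.swap i.castSucc i.succ) '' K)

section Young

variable {m : ℕ} {K : Finset (Fin m)}

lemma young_gens_swaps :
    ∀ t ∈ ((fun i : Fin m => Equiv.swap i.castSucc i.succ) '' K : Set (Perm (Fin (m+1)))),
      t.IsSwap := by
  rintro t ⟨i, -, rfl⟩
  exact ⟨i.castSucc, i.succ, (Fin.castSucc_lt_succ (i := i)).ne, rfl⟩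

local notation "G" => youngSubgroup m K
local notation "Ω" => MulAction.orbitRel.Quotient (youngSubgroup m K) (Fin (m+1))

lemma ymk_eq {x y : Fin (m+1)} :
    (Quotient.mk'' x : Ω) = Quotient.mk'' y ↔ x ∈ MulAction.orbit G y := by
  rw [← MulAction.orbitRel.Quotient.mem_orbit, MulAction.orbitRel.Quotient.orbit_mk]

lemma ymaps {σ : Perm (Fin (m+1))} (hσ : σ ∈ Subgroup.normalizer (youngSubgroup m K : Set (Equiv.Perm (Fin (m + 1)))))
    {x y : Fin (m+1)} (h : y ∈ MulAction.orbit G x) : σ y ∈ MulAction.orbit G (σ x) :=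
  normalizer_maps_orbit _ hσ h

/-- The permutation of the orbit set induced by an element of the normalizer. -/
def yφ : Subgroup.normalizer (youngSubgroup m K : Set (Equiv.Perm (Fin (m + 1)))) →* Perm Ω where
  toFun σ := Quotient.congr (σ : Perm (Fin (m+1))) (by
    intro a b
    change MulAction.orbitRel _ _ a b ↔ MulAction.orbitRel _ _ _ _
    rw [MulAction.orbitRel_apply, MulAction.orbitRel_apply]
    constructor
    · exact fun h => ymaps σ.2 h
    · intro h
      have h2 := ymaps (inv_mem σ.2) h
      simpa using h2)
  map_one' := by
    ext q
    induction q using Quotient.inductionOn'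
    rfl
  map_mul' σ τ := by
    ext q
    induction q using Quotient.inductionOn'
    rfl

lemma yφ_mk (σ : Subgroup.normalizer (youngSubgroup m K : Set (Equiv.Perm (Fin (m + 1))))) (x : Fin (m+1)) :
    yφ σ (Quotient.mk'' x) = Quotient.mk'' ((σ : Perm (Fin (m+1))) x) := rfl

end Young

section Young2

variable {m : ℕ} {K : Finset (Fin m)}

local notation "G" => youngSubgroup m K
local notation "Ω" => MulAction.orbitRel.Quotient (youngSubgroup m K) (Fin (m+1))

lemma yφ_ker : (yφ (m := m) (K := K)).ker =
    (youngSubgroup m K).subgroupOf (Subgroup.normalizer (youngSubgroup m K : Set (Equiv.Perm (Fin (m + 1))))) := by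
  ext σ
  rw [MonoidHom.mem_ker, Subgroup.mem_subgroupOf]
  constructor
  · intro h
    apply mem_closure_of_orbit_fix young_gens_swaps
    intro x
    have h2 : yφ σ (Quotient.mk'' x) = Quotient.mk'' x := by rw [h]; rfl
    rw [yφ_mk] at h2
    exact ymk_eq.mp h2
  · intro h
    ext q
    induction q using Quotient.inductionOn'
    rw [yφ_mk]
    show _ = Quotient.mk'' _
    exact ymk_eq.mpr (subgroup_apply_mem_orbit _ h _)

lemma orbit_image {σ : Perm (Fin (m+1))} (hσ : σ ∈ Subgroup.normalizer (youngSubgroup m K : Set (Equiv.Perm (Fin (m + 1)))))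
    (x : Fin (m+1)) : σ '' MulAction.orbit G x = MulAction.orbit G (σ x) := by
  ext y
  constructor
  · rintro ⟨z, hz, rfl⟩
    exact ymaps hσ hz
  · intro hy
    have h2 := ymaps (inv_mem hσ) hy
    simp only [perm_inv_apply_self'] at h2
    exact ⟨σ⁻¹ y, h2, by simp⟩

lemma orbit_card_le (q : Ω) : Nat.card q.orbit ≤ m + 1 := by
  have h := Nat.card_le_card_of_injective (Subtype.val : q.orbit → Fin (m+1))
    Subtype.val_injective
  simpa using h

/-- Orbit sizes as a function to `Fin (m+2)`. -/
noncomputable def yf : Ω → Fin (m + 2) := fun q => ⟨Nat.card q.orbit, Nat.lt_succ_of_le (orbit_card_le q)⟩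

/-- The tautological equivalence with the sigma type of orbits. -/
def yE : Fin (m+1) ≃ Σ q : Ω, q.orbit where
  toFun x := ⟨Quotient.mk'' x, x, by rw [MulAction.orbitRel.Quotient.mem_orbit]⟩
  invFun p := p.2.val
  left_inv x := rfl
  right_inv := by
    rintro ⟨q, y, hy⟩
    have h : (Quotient.mk'' y : Ω) = q := MulAction.orbitRel.Quotient.mem_orbit.mp hy
    subst h
    rfl

lemma yφ_range (π : Perm Ω) : π ∈ (yφ (m := m) (K := K)).range ↔ yf ∘ π = yf := by
  constructor
  · rintro ⟨σ, rfl⟩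
    funext q
    refine Quotient.inductionOn' q (fun x => ?_)
    show yf (yφ σ (Quotient.mk'' x)) = yf (Quotient.mk'' x)
    rw [yφ_mk]
    have h4 : Nat.card (MulAction.orbitRel.Quotient.orbit
          (Quotient.mk'' ((σ : Perm (Fin (m+1))) x) : Ω))
        = Nat.card (MulAction.orbitRel.Quotient.orbit (Quotient.mk'' x : Ω)) := by
      rw [MulAction.orbitRel.Quotient.orbit_mk, MulAction.orbitRel.Quotient.orbit_mk,
        ← orbit_image σ.2, Nat.card_image_of_injective (σ : Perm (Fin (m+1))).injective]
    exact Fin.ext h4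
  · intro h
    have hcards : ∀ q : Ω, Nat.card ((π q).orbit) = Nat.card q.orbit := by
      intro q
      have h2 := congrFun h q
      simpa [yf, Fin.ext_iff] using h2
    have hE : ∀ q : Ω, Nonempty ((q.orbit : Set (Fin (m+1))) ≃ (π q).orbit) := by
      intro q
      have h3 : Nat.card q.orbit = Nat.card ((π q).orbit) := (hcards q).symm
      letI : Fintype q.orbit := Fintype.ofFinite _
      letI : Fintype ((π q).orbit) := Fintype.ofFinite _
      rw [Nat.card_eq_fintype_card, Nat.card_eq_fintype_card] at h3
      exact ⟨Fintype.equivOfCardEq h3⟩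
    let E : ∀ q : Ω, (q.orbit : Set (Fin (m+1))) ≃ (π q).orbit := fun q => (hE q).some
    let τ : (Σ q : Ω, q.orbit) ≃ (Σ q : Ω, q.orbit) := Equiv.sigmaCongr π E
    let σ : Perm (Fin (m+1)) := (yE.trans τ).trans yE.symm
    have key : ∀ x : Fin (m+1), (Quotient.mk'' (σ x) : Ω) = π (Quotient.mk'' x) := by
      intro x
      have hm : σ x ∈ (π (Quotient.mk'' x)).orbit :=
        ((E (Quotient.mk'' x)) ⟨x, by rw [MulAction.orbitRel.Quotient.mem_orbit]⟩).2
      exact MulAction.orbitRel.Quotient.mem_orbit.mp hm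
    have hmap1 : ∀ x y : Fin (m+1), y ∈ MulAction.orbit G x →
        σ y ∈ MulAction.orbit G (σ x) := by
      intro x y hy
      rw [← ymk_eq] at hy ⊢
      rw [key, key, hy]
    have hmap2 : ∀ x y : Fin (m+1), y ∈ MulAction.orbit G x →
        σ⁻¹ y ∈ MulAction.orbit G (σ⁻¹ x) := by
      intro x y hy
      rw [← ymk_eq] at hy ⊢
      have h1 : π (Quotient.mk'' (σ⁻¹ y)) = Quotient.mk'' y := by
        rw [← key (σ⁻¹ y)]
        simp
      have h2 : π (Quotient.mk'' (σ⁻¹ x)) = Quotient.mk'' x := by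
        rw [← key (σ⁻¹ x)]
        simp
      apply π.injective
      rw [h1, h2, hy]
    have hσN : σ ∈ Subgroup.normalizer (youngSubgroup m K : Set (Equiv.Perm (Fin (m + 1)))) :=
      mem_normalizer_of_maps young_gens_swaps hmap1 hmap2
    refine ⟨⟨σ, hσN⟩, ?_⟩
    ext q
    induction q using Quotient.inductionOn'
    rw [yφ_mk]
    exact key _

end Young2

/-- The multiset of orbit sizes of a subgroup of `S_{m+1}` acting on `{1, …, m+1}`;
for a Young subgroup this is the partition of `m+1` determined by the corresponding
composition (the number `a_i` of parts equal to `i` is the number of orbits of size `i`). -/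
noncomputable def orbitSizes (m : ℕ) (P : Subgroup (Equiv.Perm (Fin (m + 1)))) : Multiset ℕ :=
  letI := Fintype.ofFinite (MulAction.orbitRel.Quotient P (Fin (m + 1)))
  (Finset.univ : Finset (MulAction.orbitRel.Quotient P (Fin (m + 1)))).val.map
    fun q => Nat.card q.orbit

lemma count_map_univ {β : Type*} (inst : Fintype β) (f : β → ℕ) (i : ℕ) :
    Multiset.count i ((@Finset.univ β inst).val.map f) = Nat.card {q : β // f q = i} := by
  classical
  rw [Multiset.count_map]
  rw [show (Multiset.filter (fun a => i = f a) (@Finset.univ β inst).val)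
      = ((@Finset.univ β inst).filter (fun a => i = f a)).val from rfl]
  rw [show Multiset.card ((@Finset.univ β inst).filter (fun a => i = f a)).val
      = Finset.card ((@Finset.univ β inst).filter (fun a => i = f a)) from rfl]
  rw [Nat.card_eq_fintype_card]
  rw [Fintype.card_subtype]
  congr 1
  apply Finset.filter_congr
  intro x _
  simp [eq_comm]

/-- If the composition of `m+1` associated to the subset `K` of simple transpositions of
`S_{m+1}` has `a_i` parts equal to `i`, then the index of the Young subgroup `W_K` in its
normalizer is `a_1! ⋅ a_2! ⋅ ⋯ ⋅ a_{m+1}!`. -/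
theorem young_normalizer_index (m : ℕ) (K : Finset (Fin m)) :
    (youngSubgroup m K).relIndex (Subgroup.normalizer (youngSubgroup m K : Set (Equiv.Perm (Fin (m + 1))))) =
      ∏ i ∈ Finset.range (m + 2),
        Nat.factorial ((orbitSizes m (youngSubgroup m K)).count i) := by
  classical
  letI instΩ : Fintype (MulAction.orbitRel.Quotient (youngSubgroup m K) (Fin (m+1))) :=
    Fintype.ofFinite _
  have h1 : (youngSubgroup m K).relIndex (Subgroup.normalizer (youngSubgroup m K : Set (Equiv.Perm (Fin (m + 1)))))
      = Nat.card (MonoidHom.range (yφ (m := m) (K := K))) := by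
    calc (youngSubgroup m K).relIndex (Subgroup.normalizer (youngSubgroup m K : Set (Equiv.Perm (Fin (m + 1)))))
        = ((youngSubgroup m K).subgroupOf (Subgroup.normalizer (youngSubgroup m K : Set (Equiv.Perm (Fin (m + 1)))))).index := rfl
      _ = Nat.card (Subgroup.normalizer (youngSubgroup m K : Set (Equiv.Perm (Fin (m + 1)))) ⧸ (yφ (m := m) (K := K)).ker) := by
          rw [← yφ_ker]; rfl
      _ = Nat.card (MonoidHom.range (yφ (m := m) (K := K))) :=
          Nat.card_congr (QuotientGroup.quotientKerEquivRange _).toEquiv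
  have h2 : Nat.card (MonoidHom.range (yφ (m := m) (K := K)))
      = Nat.card {π : Perm (MulAction.orbitRel.Quotient (youngSubgroup m K) (Fin (m+1))) //
          yf ∘ π = yf} :=
    Nat.card_congr (Equiv.subtypeEquivRight yφ_range)
  have h3 : Nat.card {π : Perm (MulAction.orbitRel.Quotient (youngSubgroup m K) (Fin (m+1))) //
        yf ∘ π = yf}
      = ∏ i : Fin (m+2), Nat.factorial (Fintype.card {q : MulAction.orbitRel.Quotient
          (youngSubgroup m K) (Fin (m+1)) // yf q = i}) := by
    rw [Nat.card_eq_fintype_card]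
    exact DomMulAct.stabilizer_card yf
  have h4 : ∀ i : Fin (m+2), Fintype.card {q : MulAction.orbitRel.Quotient
        (youngSubgroup m K) (Fin (m+1)) // yf q = i}
      = Multiset.count (i : ℕ) (orbitSizes m (youngSubgroup m K)) := by
    intro i
    rw [← Nat.card_eq_fintype_card]
    rw [orbitSizes]
    rw [count_map_univ]
    apply Nat.card_congr
    apply Equiv.subtypeEquivRight
    intro q
    constructor
    · intro h; exact congrArg Fin.val h
    · intro h; exact Fin.ext h
  rw [h1, h2, h3]
  rw [Finset.prod_congr rfl (fun i _ => by rw [h4 i])]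
  exact (Fin.prod_univ_eq_prod_range
    (fun n => Nat.factorial (Multiset.count n (orbitSizes m (youngSubgroup m K)))) (m+2))
end

section
/- In Solomon's descent algebra of a finite Coxeter group, the diagonal structure constant a_{JKK} equals the number of fixed points of W_K acting on the coset space W/W_J, i.e. a_{JKK} = |{w ∈ X_J⁻¹ ∩ X_K : w⁻¹Jw ∩ K = K}| = |Fix_{W/W_J}(W_K)|. -/
open List

/-- The set `X_J` of minimal length representatives of the left cosets of the standard
parabolic subgroup `W_J` in a Coxeter group `W`. -/
def minCosetReps {B W : Type*} [Group W] {M : CoxeterMatrix B} (cs : CoxeterSystem M W)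
    (J : Set B) : Set W :=
  {w : W | ∀ u ∈ Subgroup.closure (cs.simple '' J), cs.length w ≤ cs.length (w * u)}

namespace CoxAux

open scoped Classical

variable {B W : Type*} [Group W] {M : CoxeterMatrix B} (cs : CoxeterSystem M W)

local prefix:100 "s" => cs.simple
local prefix:100 "π" => cs.wordProd
local prefix:100 "ℓ" => cs.length

noncomputable def sig (i : B) : Equiv.Perm (W × ZMod 2) := by
  classical
  exact Function.Involutive.toPerm
    (fun p => (s i * p.1 * s i, p.2 + if p.1 = s i then 1 else 0))
    (by
      intro p
      have h1 : s i * (s i * p.1 * s i) * s i = p.1 := by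
        simp [mul_assoc, cs.simple_mul_simple_cancel_left, cs.simple_mul_simple_cancel_right]
      have h2 : (s i * p.1 * s i = s i) ↔ (p.1 = s i) := by
        constructor
        · intro h
          have := congrArg (fun x => s i * x * s i) h
          simpa [mul_assoc, cs.simple_mul_simple_cancel_left,
            cs.simple_mul_simple_cancel_right] using this
        · intro h; simp [h, cs.simple_mul_simple_cancel_right,
            cs.simple_mul_simple_self]
      ext
      · exact h1
      · simp only [h2]
        rcases eq_or_ne p.1 (s i) with h | h <;>
          simp [h1, h, ZMod]
        · show p.2 + 1 + 1 = p.2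
          have : (1 + 1 : ZMod 2) = 0 := by decide
          rw [add_assoc, this, add_zero]
        · exact (add_zero _).trans (add_zero _))

theorem sig_apply (i : B) (w : W) (e : ZMod 2) [Decidable (w = s i)] :
    sig cs i (w, e) = (s i * w * s i, e + if w = s i then 1 else 0) := by
  rcases eq_or_ne w (s i) with h | h <;>
    simp [sig, Function.Involutive.toPerm, h]

theorem sig_mul_pow_apply (i j : B) (n : ℕ) (w : W) (e : ZMod 2) :
    ((sig cs i * sig cs j) ^ n) (w, e) =
      ((s i * s j) ^ n * w * ((s i * s j) ^ n)⁻¹,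
        e + ∑ k ∈ Finset.range n,
          ((if w = s i * (s i * s j) ^ (2*k+1) then (1 : ZMod 2) else 0) +
           (if w = s i * (s i * s j) ^ (2*k+2) then (1 : ZMod 2) else 0))) := by
  set a := s i with ha
  set c := s i * s j with hc
  have hca : c⁻¹ * a = a * c := by
    rw [hc, ha, mul_inv_rev, cs.inv_simple, cs.inv_simple, mul_assoc,
      cs.simple_mul_simple_self, mul_one, cs.simple_mul_simple_cancel_left]
  induction n generalizing w e with
  | zero => simp
  | succ n ih =>
    rw [pow_succ, Equiv.Perm.mul_apply]
    have hb : (s j : W) = a * c := by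
      rw [ha, hc, ← mul_assoc, cs.simple_mul_simple_self, one_mul]
    have step : (sig cs i * sig cs j) (w, e) =
        (c * w * c⁻¹, e + ((if w = a * c ^ 1 then (1:ZMod 2) else 0) +
          (if w = a * c ^ 2 then (1:ZMod 2) else 0))) := by
      rw [Equiv.Perm.mul_apply, sig_apply, sig_apply]
      refine Prod.ext ?_ ?_
      · show s i * (s j * w * s j) * s i = c * w * c⁻¹
        rw [hc, mul_inv_rev, cs.inv_simple, cs.inv_simple]; group
      · show (e + _) + _ = e + _
        have e1 : (w = s j) ↔ (w = a * c ^ 1) := by rw [pow_one, ← hb]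
        have e2 : (s j * w * s j = s i) ↔ (w = a * c ^ 2) := by
          have hw : a * c ^ 2 = s j * s i * s j := by
            simp [ha, hc, pow_two, mul_assoc, cs.simple_mul_simple_cancel_left]
          rw [hw]
          constructor
          · intro h
            have := congrArg (fun x => s j * x * s j) h
            simpa [mul_assoc, cs.simple_mul_simple_cancel_left,
              cs.simple_mul_simple_cancel_right] using this
          · intro h
            rw [h]
            simp [mul_assoc, cs.simple_mul_simple_cancel_left, cs.simple_mul_simple_self]
        rw [e1, e2, add_assoc]
    rw [step, ih]
    have key : ∀ m : ℕ, (c * w * c⁻¹ = a * c ^ m) ↔ (w = a * c ^ (m + 2)) := by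
      intro m
      have hrel : c⁻¹ * (a * c ^ m) * c = a * c ^ (m + 2) := by
        calc c⁻¹ * (a * c ^ m) * c = (c⁻¹ * a) * (c ^ m * c) := by group
          _ = a * (c * (c ^ m * c)) := by rw [hca]; group
          _ = a * c ^ (m + 2) := by rw [← pow_succ, ← pow_succ']
      constructor
      · intro h
        have hw : w = c⁻¹ * (c * w * c⁻¹) * c := by group
        rw [hw, h, hrel]
      · intro h
        rw [h, ← hrel]
        group
    refine Prod.ext ?_ ?_
    · show c ^ n * (c * w * c⁻¹) * (c ^ n)⁻¹ = c ^ (n+1) * w * (c ^ (n+1))⁻¹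
      rw [pow_succ' c n]; group
    · show (e + _) + _ = e + _
      rw [Finset.sum_range_succ', add_assoc]
      congr 1
      rw [add_comm]
      congr 1
      · apply Finset.sum_congr rfl
        intro k _
        have k1 : 2 * (k + 1) + 1 = (2 * k + 1) + 2 := by ring
        have k2 : 2 * (k + 1) + 2 = (2 * k + 2) + 2 := by ring
        rw [k1, k2, ← key, ← key]


theorem sig_liftable : M.IsLiftable (sig cs) := by
  intro i j
  apply Equiv.ext
  rintro ⟨w, e⟩
  rw [sig_mul_pow_apply]
  have hm : ((s i * s j) : W) ^ M i j = 1 := cs.simple_mul_simple_pow i j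
  have hperm : ((1 : Equiv.Perm (W × ZMod 2))) (w, e) = (w, e) := rfl
  rw [hperm]
  set g : ℕ → ZMod 2 := fun t => if w = s i * (s i * s j) ^ t then 1 else 0 with hg
  refine Prod.ext ?_ ?_
  · show (s i * s j) ^ M i j * w * ((s i * s j) ^ M i j)⁻¹ = w
    rw [hm]; group
  · show e + ∑ k ∈ Finset.range (M i j), (g (2*k+1) + g (2*k+2)) = e
    have step1 : ∀ N : ℕ, (∑ k ∈ Finset.range N, (g (2*k+1) + g (2*k+2)))
        = ∑ t ∈ Finset.range (2*N), g (t+1) := by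
      intro N
      induction N with
      | zero => simp
      | succ N ih =>
        rw [Finset.sum_range_succ, ih]
        have h2 : 2 * (N + 1) = (2 * N + 1) + 1 := by ring
        rw [h2, Finset.sum_range_succ, Finset.sum_range_succ]
        have e1 : 2 * N + 1 + 1 = 2 * N + 2 := by ring
        rw [e1, add_assoc]
    rw [step1]
    have h2m : 2 * M i j = M i j + M i j := by ring
    rw [h2m, Finset.sum_range_add]
    have hshift : ∀ t : ℕ, g (M i j + t + 1) = g (t + 1) := by
      intro t
      have : (s i * s j : W) ^ (M i j + t + 1) = (s i * s j) ^ (t + 1) := by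
        rw [add_assoc, pow_add, hm, one_mul]
      simp only [hg, this]
    have : ∑ t ∈ Finset.range (M i j), g (M i j + t + 1)
        = ∑ t ∈ Finset.range (M i j), g (t + 1) := by
      apply Finset.sum_congr rfl; intro t _; exact hshift t
    have hsum : (∑ t ∈ Finset.range (M i j), g (t+1)) + (∑ t ∈ Finset.range (M i j), g (t+1)) = 0 := by
      rw [← two_mul]
      have : (2 : ZMod 2) = 0 := by decide
      rw [this, zero_mul]
    calc e + ((∑ t ∈ Finset.range (M i j), g (t+1)) + ∑ t ∈ Finset.range (M i j), g (M i j + t + 1))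
        = e + ((∑ t ∈ Finset.range (M i j), g (t+1)) + ∑ t ∈ Finset.range (M i j), g (t + 1)) := by
          rw [this]
      _ = e := by rw [hsum, add_zero]

/-- The Björner–Brenti permutation representation on `W × ZMod 2`. -/
noncomputable def psi : W →* Equiv.Perm (W × ZMod 2) := cs.lift ⟨sig cs, sig_liftable cs⟩

theorem psi_simple (i : B) : psi cs (s i) = sig cs i := cs.lift_apply_simple (sig_liftable cs) i

theorem psi_wordProd (ω : List B) (w₀ : W) (e : ZMod 2) :
    psi cs (π ω) (w₀, e) = (π ω * w₀ * (π ω)⁻¹, e + ((cs.rightInvSeq ω).count w₀ : ZMod 2)) := by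
  induction ω generalizing e with
  | nil => simp [psi]
  | cons i ω ih =>
    rw [cs.wordProd_cons, map_mul, Equiv.Perm.mul_apply, ih, psi_simple, sig_apply]
    have hris : cs.rightInvSeq (i :: ω) = ((π ω)⁻¹ * (s i) * (π ω)) :: cs.rightInvSeq ω := rfl
    have hcond : (π ω * w₀ * (π ω)⁻¹ = s i) ↔ (w₀ = (π ω)⁻¹ * s i * π ω) := by
      constructor
      · intro h
        have : (π ω)⁻¹ * (π ω * w₀ * (π ω)⁻¹) * (π ω) = (π ω)⁻¹ * s i * (π ω) := by rw [h]
        rw [← this]; group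
      · intro h; rw [h]; group
    refine Prod.ext ?_ ?_
    · show s i * (π ω * w₀ * (π ω)⁻¹) * s i = s i * π ω * w₀ * (s i * π ω)⁻¹
      rw [mul_inv_rev, cs.inv_simple]; group
    · dsimp only
      rw [hris, List.count_cons]
      rcases eq_or_ne w₀ ((π ω)⁻¹ * s i * π ω) with h | h
      · rw [if_pos (hcond.mpr h), if_pos (beq_iff_eq.mpr h.symm)]
        push_cast
        ring
      · rw [if_neg (fun hc => h (hcond.mp hc)), if_neg (fun hc => h (beq_iff_eq.mp hc).symm)]
        push_cast
        ring


noncomputable def eta (w t : W) : ZMod 2 := (psi cs w (t, 0)).2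

theorem psi_apply (w t : W) (e : ZMod 2) :
    psi cs w (t, e) = (w * t * w⁻¹, e + eta cs w t) := by
  obtain ⟨ω, rfl⟩ := cs.wordProd_surjective w
  rw [psi_wordProd, eta, psi_wordProd, zero_add]

theorem eta_simple (i : B) (t : W) : eta cs (s i) t = if t = s i then 1 else 0 := by
  rw [eta, psi_simple, sig_apply]
  show (0 : ZMod 2) + _ = _
  rw [zero_add]

theorem eta_count (ω : List B) (t : W) :
    eta cs (π ω) t = ((cs.rightInvSeq ω).count t : ZMod 2) := by
  rw [eta, psi_wordProd, zero_add]

theorem eta_one (t : W) : eta cs 1 t = 0 := by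
  rw [eta, map_one]; rfl

theorem eta_mul (w v t : W) : eta cs (w * v) t = eta cs v t + eta cs w (v * t * v⁻¹) := by
  have h : psi cs (w * v) (t, 0) = psi cs w (psi cs v (t, 0)) := by
    rw [map_mul]; rfl
  rw [eta, h, psi_apply, psi_apply, zero_add]

theorem eta_refl {t : W} (ht : cs.IsReflection t) : eta cs t t = 1 := by
  obtain ⟨v, i, rfl⟩ := ht
  set t := v * s i * v⁻¹ with hts
  have hconj : v⁻¹ * t * (v⁻¹)⁻¹ = s i := by rw [hts]; group
  have h0 : (0 : ZMod 2) = eta cs v⁻¹ t + eta cs v (s i) := by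
    rw [← hconj, ← eta_mul, mul_inv_cancel, eta_one]
  have hsi : s i * (s i) * (s i)⁻¹ = s i := by group
  have hmid : eta cs (v * s i) (s i) = 1 + eta cs v (s i) := by
    have := eta_mul cs v (s i) (s i)
    rw [hsi] at this
    rw [this, eta_simple, if_pos rfl]
  have h1 : eta cs t t = eta cs v⁻¹ t + eta cs (v * s i) (v⁻¹ * t * (v⁻¹)⁻¹) := by
    rw [hts]
    have : v * s i * v⁻¹ = (v * s i) * v⁻¹ := by group
    rw [this, eta_mul]
  rw [h1, hconj, hmid]
  have := h0
  generalize eta cs v⁻¹ t = A at *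
  generalize eta cs v (s i) = C at *
  linear_combination -this

theorem eta_mul_reflection (w : W) {t : W} (ht : cs.IsReflection t) :
    eta cs (w * t) t = eta cs w t + 1 := by
  have h := eta_mul cs w t t
  have h2 : t * t * t⁻¹ = t := by group
  rw [h2, eta_refl cs ht] at h
  rw [h, add_comm]

theorem isRightInversion_iff_eta {w t : W} (ht : cs.IsReflection t) :
    cs.IsRightInversion w t ↔ eta cs w t = 1 := by
  constructor
  · intro hinv
    by_contra hne
    have h0 : eta cs w t = 0 := by
      have : ∀ x : ZMod 2, x ≠ 1 → x = 0 := by decide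
      exact this _ hne
    have h1 : eta cs (w * t) t = 1 := by rw [eta_mul_reflection cs w ht, h0, zero_add]
    -- then w * t has t as right inversion, i.e. ℓ (w * t * t) < ℓ (w * t)
    obtain ⟨ω, hred, hw⟩ := cs.exists_reduced_word' (w * t)
    rw [hw, eta_count] at h1
    have hmem : t ∈ cs.rightInvSeq ω := by
      by_contra hmem
      rw [(List.count_eq_zero).mpr hmem] at h1
      simp at h1
    have := cs.isRightInversion_of_mem_rightInvSeq hred hmem
    rw [← hw] at this
    have h3 : w * t * t = w := by rw [mul_assoc, ht.mul_self, mul_one]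
    have h4 := this.2
    rw [h3] at h4
    exact Nat.lt_asymm hinv.2 h4
  · intro h1
    obtain ⟨ω, hred, hw⟩ := cs.exists_reduced_word' w
    rw [hw, eta_count] at h1
    have hmem : t ∈ cs.rightInvSeq ω := by
      by_contra hmem
      rw [(List.count_eq_zero).mpr hmem] at h1
      simp at h1
    have := cs.isRightInversion_of_mem_rightInvSeq hred hmem
    rwa [← hw] at this

theorem strong_exchange {ω : List B} (hred : cs.IsReduced ω) {t : W} (ht : cs.IsReflection t)
    (hlt : ℓ (π ω * t) < ℓ (π ω)) :
    ∃ k, ∃ _ : k < ω.length, π ω * t = π (ω.eraseIdx k) := by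
  have h1 : eta cs (π ω) t = 1 := (isRightInversion_iff_eta cs ht).mp ⟨ht, hlt⟩
  rw [eta_count] at h1
  have hmem : t ∈ cs.rightInvSeq ω := by
    by_contra hmem
    rw [(List.count_eq_zero).mpr hmem] at h1
    simp at h1
  obtain ⟨k, hk, hkt⟩ := List.mem_iff_getElem.mp hmem
  rw [cs.length_rightInvSeq] at hk
  refine ⟨k, hk, ?_⟩
  have := cs.wordProd_mul_getD_rightInvSeq ω k
  rw [List.getD_eq_getElem _ 1 (by rw [cs.length_rightInvSeq]; exact hk), hkt] at this
  exact this

section Parabolic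

variable (J : Set B)

theorem wordProd_mem_closure {ω : List B} (hω : ∀ b ∈ ω, b ∈ J) :
    π ω ∈ Subgroup.closure (cs.simple '' J) := by
  induction ω with
  | nil => simpa using one_mem _
  | cons i ω ih =>
    rw [cs.wordProd_cons]
    exact mul_mem (Subgroup.subset_closure ⟨i, hω i (by simp), rfl⟩)
      (ih (fun b hb => hω b (by simp [hb])))

theorem exists_JWord {u : W} (hu : u ∈ Subgroup.closure (cs.simple '' J)) :
    ∃ ω : List B, (∀ b ∈ ω, b ∈ J) ∧ π ω = u := by
  refine Subgroup.closure_induction ?_ ?_ ?_ ?_ hu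
  · rintro x ⟨i, hi, rfl⟩
    exact ⟨[i], by simpa using hi, by simp⟩
  · exact ⟨[], by simp, by simp⟩
  · rintro x y _ _ ⟨ω₁, h1, rfl⟩ ⟨ω₂, h2, rfl⟩
    refine ⟨ω₁ ++ ω₂, ?_, by rw [cs.wordProd_append]⟩
    intro b hb
    rcases List.mem_append.mp hb with h | h
    exacts [h1 b h, h2 b h]
  · rintro x _ ⟨ω, h1, rfl⟩
    exact ⟨ω.reverse, fun b hb => h1 b (List.mem_reverse.mp hb), by rw [cs.wordProd_reverse]⟩

theorem minrep_key : ∀ n : ℕ, ∀ ω : List B, ω.length ≤ n → (∀ b ∈ ω, b ∈ J) →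
    (∀ w ∈ minCosetReps cs J, ℓ (w * π ω) = ℓ w + ℓ (π ω)) ∧
    (∃ τ : List B, (∀ b ∈ τ, b ∈ J) ∧ cs.IsReduced τ ∧ π τ = π ω) := by
  intro n
  induction n with
  | zero =>
    intro ω hlen _
    have : ω = [] := List.eq_nil_of_length_eq_zero (Nat.le_zero.mp hlen)
    subst this
    constructor
    · intro w _; simp
    · exact ⟨[], by simp, by simp [CoxeterSystem.IsReduced], rfl⟩
  | succ n ih =>
    intro ω hlen hJ
    by_cases hsmall : ω.length ≤ n
    · exact ih ω hsmall hJ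
    have hne : ω ≠ [] := by
      intro h; subst h; simp at hsmall
    obtain ⟨ω', j, rfl⟩ : ∃ ω' j, ω = ω' ++ [j] :=
      ⟨ω.dropLast, ω.getLast hne, (List.dropLast_append_getLast hne).symm⟩
    have hj : j ∈ J := hJ j (by simp)
    have hJ' : ∀ b ∈ ω', b ∈ J := fun b hb => hJ b (by simp [hb])
    have hlen' : ω'.length ≤ n := by
      simp only [List.length_append, List.length_singleton] at hlen
      omega
    obtain ⟨add', τ, hτJ, hτred, hτprod⟩ := ih ω' hlen' hJ'
    have hτlen : τ.length = ℓ (π ω') := by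
      have := hτred
      rw [CoxeterSystem.IsReduced, hτprod] at this
      omega
    have hu : π (ω' ++ [j]) = π ω' * s j := by
      rw [cs.wordProd_append, cs.wordProd_singleton]
    rcases cs.length_mul_simple (π ω') j with hup | hdown
    · -- length goes up
      constructor
      · intro w hw
        rcases cs.length_mul_simple (w * π ω') j with h1 | h2
        · rw [hu, ← mul_assoc, h1, add' w hw, hup]
          omega
        · exfalso
          obtain ⟨ρ, hρred, hρ⟩ := cs.exists_reduced_word' w
          have hρlen : ρ.length = ℓ w := by
            have := hρred
            rw [CoxeterSystem.IsReduced, ← hρ] at this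
            omega
          have hθprod : π (ρ ++ τ) = w * π ω' := by
            rw [cs.wordProd_append, ← hρ, hτprod]
          have hθred : cs.IsReduced (ρ ++ τ) := by
            rw [CoxeterSystem.IsReduced, hθprod, List.length_append, hρlen, hτlen]
            exact add' w hw
          have hlt : ℓ (π (ρ ++ τ) * s j) < ℓ (π (ρ ++ τ)) := by
            rw [hθprod]; omega
          obtain ⟨k, hk, hkeq⟩ := strong_exchange cs hθred (cs.isReflection_simple j) hlt
          rw [hθprod] at hkeq
          by_cases hkρ : k < ρ.length
          · have herase : (ρ ++ τ).eraseIdx k = ρ.eraseIdx k ++ τ :=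
              List.eraseIdx_append_of_lt_length hkρ τ
            rw [herase, cs.wordProd_append, hτprod] at hkeq
            have h5 : π (ρ.eraseIdx k) = w * π ω' * s j * (π ω')⁻¹ :=
              eq_mul_inv_iff_mul_eq.mpr hkeq.symm
            have hv : w * (π ω' * s j * (π ω')⁻¹) = π (ρ.eraseIdx k) := by
              rw [h5]; group
            have hmem : π ω' * s j * (π ω')⁻¹ ∈ Subgroup.closure (cs.simple '' J) :=
              mul_mem (mul_mem (wordProd_mem_closure cs J hJ')
                (Subgroup.subset_closure ⟨j, hj, rfl⟩))
                (inv_mem (wordProd_mem_closure cs J hJ'))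
            have hmin := hw _ hmem
            rw [hv] at hmin
            have hle := cs.length_wordProd_le (ρ.eraseIdx k)
            have := List.length_eraseIdx_add_one hkρ
            omega
          · push_neg at hkρ
            have herase : (ρ ++ τ).eraseIdx k = ρ ++ τ.eraseIdx (k - ρ.length) :=
              List.eraseIdx_append_of_length_le hkρ τ
            rw [herase, cs.wordProd_append, ← hρ] at hkeq
            have hueq : π ω' * s j = π (τ.eraseIdx (k - ρ.length)) := by
              have := hkeq
              rw [mul_assoc] at this
              exact mul_left_cancel this
            have hklt : k - ρ.length < τ.length := by
              rw [List.length_append] at hk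
              omega
            have hle := cs.length_wordProd_le (τ.eraseIdx (k - ρ.length))
            rw [← hueq] at hle
            have := List.length_eraseIdx_add_one hklt
            omega
      · refine ⟨τ ++ [j], ?_, ?_, ?_⟩
        · intro b hb
          rcases List.mem_append.mp hb with h | h
          · exact hτJ b h
          · simp at h; subst h; exact hj
        · rw [CoxeterSystem.IsReduced, cs.wordProd_append, cs.wordProd_singleton, hτprod,
            List.length_append, List.length_singleton, hτlen, hup]
        · simp [cs.wordProd_append, hτprod]
    · -- length goes down; exchange within τ
      have hlt : ℓ (π τ * s j) < ℓ (π τ) := by rw [hτprod]; omega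
      obtain ⟨k, hk, hkeq⟩ := strong_exchange cs hτred (cs.isReflection_simple j) hlt
      rw [hτprod] at hkeq
      have hτdelJ : ∀ b ∈ τ.eraseIdx k, b ∈ J := fun b hb =>
        hτJ b ((List.eraseIdx_sublist τ k).subset hb)
      have hτdellen : (τ.eraseIdx k).length ≤ n := by
        have h1 := List.length_eraseIdx_add_one hk
        have h2 := cs.length_wordProd_le ω'
        omega
      obtain ⟨addd, τ₂, hτ₂J, hτ₂red, hτ₂prod⟩ := ih (τ.eraseIdx k) hτdellen hτdelJ
      rw [← hkeq] at addd hτ₂prod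
      constructor
      · intro w hw
        have := addd w hw
        rw [hu, ← mul_assoc]
        rw [← mul_assoc] at this
        exact this
      · exact ⟨τ₂, hτ₂J, hτ₂red, by rw [hτ₂prod, hu]⟩

end Parabolic

theorem minrep_mul {J : Set B} {w u : W} (hw : w ∈ minCosetReps cs J)
    (hu : u ∈ Subgroup.closure (cs.simple '' J)) : ℓ (w * u) = ℓ w + ℓ u := by
  obtain ⟨ω, hωJ, rfl⟩ := exists_JWord cs J hu
  exact (minrep_key cs J ω.length ω le_rfl hωJ).1 w hw

theorem minrep_unique {J : Set B} {w w' : W} (hw : w ∈ minCosetReps cs J)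
    (hw' : w' ∈ minCosetReps cs J) (h : w⁻¹ * w' ∈ Subgroup.closure (cs.simple '' J)) :
    w = w' := by
  have h1 : ℓ (w * (w⁻¹ * w')) = ℓ w + ℓ (w⁻¹ * w') := minrep_mul cs hw h
  have h2 : ℓ (w' * (w'⁻¹ * w)) = ℓ w' + ℓ (w'⁻¹ * w) := by
    apply minrep_mul cs hw'
    have : w'⁻¹ * w = (w⁻¹ * w')⁻¹ := by group
    rw [this]
    exact inv_mem h
  have e1 : w * (w⁻¹ * w') = w' := by group
  have e2 : w' * (w'⁻¹ * w) = w := by group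
  rw [e1] at h1
  rw [e2] at h2
  have e3 : ℓ (w'⁻¹ * w) = ℓ (w⁻¹ * w') := by
    have : w'⁻¹ * w = (w⁻¹ * w')⁻¹ := by group
    rw [this, cs.length_inv]
  have hzero : ℓ (w⁻¹ * w') = 0 := by omega
  have : w⁻¹ * w' = 1 := cs.length_eq_zero_iff.mp hzero
  have : w' = w * 1 := by rw [← this]; group
  rw [this, mul_one]

theorem length_one_mem_closure (J : Set B) {v : W}
    (hv : v ∈ Subgroup.closure (cs.simple '' J)) (hl : ℓ v = 1) : v ∈ cs.simple '' J := by
  obtain ⟨ω, hωJ, rfl⟩ := exists_JWord cs J hv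
  obtain ⟨τ, hτJ, hτred, hτprod⟩ := (minrep_key cs J ω.length ω le_rfl hωJ).2
  have hlen : τ.length = 1 := by
    have := hτred
    rw [CoxeterSystem.IsReduced, hτprod, hl] at this
    omega
  obtain ⟨b, rfl⟩ := List.length_eq_one_iff.mp hlen
  rw [← hτprod, cs.wordProd_singleton]
  exact ⟨b, hτJ b (by simp), rfl⟩

theorem fixed_iff (J K : Set B) (h : W) :
    (QuotientGroup.mk h : W ⧸ Subgroup.closure (cs.simple '' J)) ∈
      MulAction.fixedPoints (↥(Subgroup.closure (cs.simple '' K)))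
        (W ⧸ Subgroup.closure (cs.simple '' J)) ↔
    ∀ q ∈ Subgroup.closure (cs.simple '' K), h⁻¹ * q * h ∈ Subgroup.closure (cs.simple '' J) := by
  rw [MulAction.mem_fixedPoints]
  constructor
  · intro hf q hq
    have := hf ⟨q⁻¹, inv_mem hq⟩
    change ((q⁻¹ : W) • (QuotientGroup.mk h : W ⧸ Subgroup.closure (cs.simple '' J))) = _ at this
    rw [MulAction.Quotient.smul_mk, smul_eq_mul] at this
    have h2 := QuotientGroup.eq.mp this
    have h3 : ((q⁻¹ : W) * h)⁻¹ * h = h⁻¹ * q * h := by group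
    rwa [h3] at h2
  · intro hall q
    obtain ⟨q, hq⟩ := q
    change ((q : W) • (QuotientGroup.mk h : W ⧸ Subgroup.closure (cs.simple '' J))) = _
    rw [MulAction.Quotient.smul_mk, smul_eq_mul, QuotientGroup.eq]
    have h3 : (q * h)⁻¹ * h = h⁻¹ * q⁻¹ * h := by group
    rw [h3]
    exact hall q⁻¹ (inv_mem hq)

end CoxAux

/-- The diagonal structure constant `a_{JKK}` of Solomon's descent algebra, i.e. the number
of `w ∈ X_J⁻¹ ∩ X_K` with `w⁻¹Jw ∩ K = K`, equals the number of fixed points of `W_K`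
acting on the coset space `W ⧸ W_J`. -/
theorem descent_diagonal_structure_constant_eq_card_fixedPoints
    {B W : Type*} [Group W] (M : CoxeterMatrix B) (cs : CoxeterSystem M W) [Finite W]
    (J K : Set B) :
    Nat.card {g : W // g⁻¹ ∈ minCosetReps cs J ∧ g ∈ minCosetReps cs K ∧
        ((fun x => g⁻¹ * x * g) '' (cs.simple '' J)) ∩ (cs.simple '' K) = cs.simple '' K} =
      Nat.card (MulAction.fixedPoints (↥(Subgroup.closure (cs.simple '' K)))
        (W ⧸ Subgroup.closure (cs.simple '' J))) := by
  classical
  apply Nat.card_congr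
  have hmap : ∀ g : W, (g⁻¹ ∈ minCosetReps cs J ∧ g ∈ minCosetReps cs K ∧
      ((fun x => g⁻¹ * x * g) '' (cs.simple '' J)) ∩ (cs.simple '' K) = cs.simple '' K) →
      (QuotientGroup.mk g⁻¹ : W ⧸ Subgroup.closure (cs.simple '' J)) ∈
        MulAction.fixedPoints (↥(Subgroup.closure (cs.simple '' K)))
          (W ⧸ Subgroup.closure (cs.simple '' J)) := by
    rintro g ⟨hgJ, hgK, hcond⟩
    rw [CoxAux.fixed_iff]
    have hQP : Subgroup.closure (cs.simple '' K) ≤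
        (Subgroup.closure (cs.simple '' J)).comap (MulAut.conj g).toMonoidHom := by
      rw [Subgroup.closure_le]
      intro t ht
      have ht2 : t ∈ ((fun x => g⁻¹ * x * g) '' (cs.simple '' J)) ∩ (cs.simple '' K) := by
        rw [hcond]; exact ht
      obtain ⟨t', ht', htt⟩ := ht2.1
      have he : (MulAut.conj g).toMonoidHom t = t' := by
        rw [← htt]
        show g * (g⁻¹ * t' * g) * g⁻¹ = t'
        group
      show t ∈ (Subgroup.closure (cs.simple '' J)).comap (MulAut.conj g).toMonoidHom
      rw [Subgroup.mem_comap, he]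
      exact Subgroup.subset_closure ht'
    intro q hq
    have h2 := Subgroup.mem_comap.mp (hQP hq)
    have h3 : (MulAut.conj g).toMonoidHom q = g * q * g⁻¹ := rfl
    rw [h3] at h2
    have h4 : (g⁻¹)⁻¹ * q * g⁻¹ = g * q * g⁻¹ := by rw [inv_inv]
    rwa [h4]
  refine Equiv.ofBijective (fun a => ⟨QuotientGroup.mk (a.1)⁻¹, hmap a.1 a.2⟩) ⟨?_, ?_⟩
  · rintro ⟨g, hg⟩ ⟨g', hg'⟩ hgg
    simp only [Subtype.mk.injEq] at hgg ⊢
    have hm : (g⁻¹)⁻¹ * g'⁻¹ ∈ Subgroup.closure (cs.simple '' J) := QuotientGroup.eq.mp hgg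
    have := CoxAux.minrep_unique cs hg.1 hg'.1 hm
    exact inv_injective this
  · rintro ⟨x, hx⟩
    obtain ⟨x, rfl⟩ := QuotientGroup.mk_surjective x
    have hLne : (Set.range (fun u : Subgroup.closure (cs.simple '' J) =>
        cs.length (x * u))).Nonempty := ⟨cs.length x, ⟨1, one_mem _⟩, by simp⟩
    obtain ⟨⟨u₀, hu₀P⟩, hu₀len⟩ := Nat.sInf_mem hLne
    set h := x * u₀ with hh
    have hmin : ∀ u ∈ Subgroup.closure (cs.simple '' J), cs.length h ≤ cs.length (h * u) := by
      intro u hu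
      have : cs.length h = sInf (Set.range (fun u : Subgroup.closure (cs.simple '' J) =>
          cs.length (x * u))) := hu₀len
      rw [this]
      apply Nat.sInf_le
      exact ⟨⟨u₀ * u, mul_mem hu₀P hu⟩, by simp [hh, mul_assoc]⟩
    have hhJ : h ∈ minCosetReps cs J := hmin
    have hmkx : (QuotientGroup.mk h : W ⧸ Subgroup.closure (cs.simple '' J)) =
        QuotientGroup.mk x := by
      rw [QuotientGroup.eq]
      have : h⁻¹ * x = u₀⁻¹ := by rw [hh]; group
      rw [this]
      exact inv_mem hu₀P
    have hfix : ∀ q ∈ Subgroup.closure (cs.simple '' K),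
        h⁻¹ * q * h ∈ Subgroup.closure (cs.simple '' J) := by
      apply (CoxAux.fixed_iff cs J K h).mp
      rw [hmkx]
      exact hx
    have hconjsimple : ∀ i ∈ K, h⁻¹ * cs.simple i * h ∈ cs.simple '' J := by
      intro i hi
      have hv : h⁻¹ * cs.simple i * h ∈ Subgroup.closure (cs.simple '' J) :=
        hfix (cs.simple i) (Subgroup.subset_closure ⟨i, hi, rfl⟩)
      have hlen1 : cs.length (h * (h⁻¹ * cs.simple i * h)) =
          cs.length h + cs.length (h⁻¹ * cs.simple i * h) := CoxAux.minrep_mul cs hhJ hv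
      have hsimp : h * (h⁻¹ * cs.simple i * h) = cs.simple i * h := by group
      rw [hsimp] at hlen1
      rcases cs.length_simple_mul h i with hup | hdown
      · have : cs.length (h⁻¹ * cs.simple i * h) = 1 := by omega
        exact CoxAux.length_one_mem_closure cs J hv this
      · omega
    refine ⟨⟨h⁻¹, ?_, ?_, ?_⟩, ?_⟩
    · rw [inv_inv]; exact hhJ
    · intro u hu
      have h1 : cs.length (h⁻¹ * u) = cs.length (u⁻¹ * h) := by
        rw [← cs.length_inv]; congr 1; group
      have h2 : u⁻¹ * h = h * (h⁻¹ * u⁻¹ * h) := by group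
      have h3 : h⁻¹ * u⁻¹ * h ∈ Subgroup.closure (cs.simple '' J) := hfix u⁻¹ (inv_mem hu)
      rw [h1, h2, CoxAux.minrep_mul cs hhJ h3, cs.length_inv]
      omega
    · rw [Set.inter_eq_right]
      rintro t ⟨i, hi, rfl⟩
      refine ⟨h⁻¹ * cs.simple i * h, hconjsimple i hi, ?_⟩
      show (h⁻¹)⁻¹ * (h⁻¹ * cs.simple i * h) * h⁻¹ = cs.simple i
      group
    · apply Subtype.ext
      show (QuotientGroup.mk (h⁻¹)⁻¹ : W ⧸ Subgroup.closure (cs.simple '' J)) =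
        QuotientGroup.mk x
      rw [inv_inv]
      exact hmkx
end

section
/- Consider the action of S_n (n > 2) on unordered complementary pairs {P, I∖P} of subsets of I = {1,…,n} induced by the natural action on I. For a permutation c that cyclically permutes a subset J ⊆ I with |J| ≥ 2 and fixes the rest, a pair {P, Q} is fixed by c if and only if J ⊆ P or J ⊆ Q; consequently the number of fixed pairs of c is even when J ≠ I. -/
open Pointwise

/-- Let `S_n` (`n > 2`) act on unordered complementary pairs `{P, I ∖ P}` of subsets of
`I = {1, …, n}` by applying a permutation to both members. For a cycle `c` with support
`J`, `2 ≤ |J| < n`, a pair `{P, Pᶜ}` is fixed by `c` if and only if `J ⊆ P` or `J ⊆ Pᶜ`;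
consequently the number of fixed pairs of `c` is even. -/
theorem cycle_fixed_complementary_pairs
    (n : ℕ) (hn : 2 < n) (c : Equiv.Perm (Fin n)) (hc : c.IsCycle)
    (hJ : c.support.card < n) :
    (∀ P : Set (Fin n),
      c • ({P, Pᶜ} : Set (Set (Fin n))) = {P, Pᶜ} ↔
        ((c.support : Set (Fin n)) ⊆ P ∨ (c.support : Set (Fin n)) ⊆ Pᶜ)) ∧
    Even (Nat.card {pq : Set (Set (Fin n)) //
      (∃ P : Set (Fin n), pq = {P, Pᶜ}) ∧ c • pq = pq}) := by
  classical
  set J := c.support with hJdef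
  -- there is a point outside the support
  have hJne : (J : Finset (Fin n)) ≠ Finset.univ := by
    intro h
    rw [h, Finset.card_univ, Fintype.card_fin] at hJ
    exact lt_irrefl _ hJ
  obtain ⟨x0, hx0⟩ : ∃ x0 : Fin n, x0 ∉ J := by
    by_contra h
    push_neg at h
    exact hJne (Finset.eq_univ_iff_forall.mpr h)
  have hx0fix : c x0 = x0 := Equiv.Perm.notMem_support.mp hx0
  -- J is nonempty
  have hJnonempty : ∃ x, x ∈ J := by
    obtain ⟨x, hx⟩ := hc
    exact ⟨x, Equiv.Perm.mem_support.mpr hx.1⟩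
  -- Key lemma: c • P = P ↔ J ⊆ P ∨ J ⊆ Pᶜ
  have key : ∀ P : Set (Fin n), c • P = P ↔
      ((J : Set (Fin n)) ⊆ P ∨ (J : Set (Fin n)) ⊆ Pᶜ) := by
    intro P
    constructor
    · intro h
      by_cases hcap : ∃ x ∈ P, x ∈ J
      · left
        obtain ⟨x, hxP, hxJ⟩ := hcap
        intro y hyJ
        simp only [Finset.coe_sort_coe, Finset.mem_coe] at hyJ
        have hsc : c.SameCycle x y :=
          hc.sameCycle (Equiv.Perm.mem_support.mp hxJ) (Equiv.Perm.mem_support.mp hyJ)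
        obtain ⟨k, hk⟩ := hsc
        have hstab : c ∈ MulAction.stabilizer (Equiv.Perm (Fin n)) P := h
        have hk' : (c ^ k) • P = P := zpow_mem hstab k
        have : (c ^ k) • x ∈ (c ^ k) • P := Set.smul_mem_smul_set hxP
        rw [hk'] at this
        simpa [hk] using this
      · right
        push_neg at hcap
        intro y hyJ hyP
        exact hcap y hyP (by simpa using hyJ)
    · intro h
      ext x
      rw [Set.mem_smul_set_iff_inv_smul_mem]
      by_cases hx : x ∈ J
      · have hx' : c⁻¹ x ∈ J := by
          rw [hJdef, ← Equiv.Perm.support_inv]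
          exact Equiv.Perm.apply_mem_support.mpr (by rwa [Equiv.Perm.support_inv])
        rcases h with h | h
        · simp only [Equiv.Perm.smul_def]
          exact iff_of_true (h hx') (h hx)
        · exact iff_of_false (fun hm => h hx' hm) (fun hm => h hx hm)
      · have : c⁻¹ x = x := by
          rw [← Equiv.Perm.notMem_support, Equiv.Perm.support_inv]
          exact hx
        simp [Equiv.Perm.smul_def, this]
  -- Pair fixedness reduces to c • P = P
  have pairkey : ∀ P : Set (Fin n),
      c • ({P, Pᶜ} : Set (Set (Fin n))) = {P, Pᶜ} ↔ c • P = P := by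
    intro P
    have hsmul : c • ({P, Pᶜ} : Set (Set (Fin n))) = {c • P, (c • P)ᶜ} := by
      rw [Set.smul_set_insert, Set.smul_set_singleton, Set.smul_set_compl]
    rw [hsmul]
    constructor
    · intro h
      have : c • P ∈ ({P, Pᶜ} : Set (Set (Fin n))) := by
        rw [← h]; exact Set.mem_insert _ _
      rcases this with h1 | h1
      · exact h1
      · -- c • P = Pᶜ is impossible
        exfalso
        simp only [Set.mem_singleton_iff] at h1
        by_cases hx0P : x0 ∈ P
        · have : c • x0 ∈ c • P := Set.smul_mem_smul_set hx0P
          rw [h1] at this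
          simp only [Equiv.Perm.smul_def, hx0fix] at this
          exact this hx0P
        · have : x0 ∈ Pᶜ := hx0P
          rw [← h1] at this
          rw [Set.mem_smul_set_iff_inv_smul_mem] at this
          have hinv : c⁻¹ x0 = x0 := c.injective (by simp [hx0fix])
          rw [Equiv.Perm.smul_def, hinv] at this
          exact hx0P this
    · intro h
      rw [h]
  -- First part
  have part1 : ∀ P : Set (Fin n),
      c • ({P, Pᶜ} : Set (Set (Fin n))) = {P, Pᶜ} ↔
        ((J : Set (Fin n)) ⊆ P ∨ (J : Set (Fin n)) ⊆ Pᶜ) := by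
    intro P
    rw [pairkey P, key P]
  refine ⟨part1, ?_⟩
  -- Bijection between fixed pairs and supersets of J
  have hbij : Nat.card {pq : Set (Set (Fin n)) //
      (∃ P : Set (Fin n), pq = {P, Pᶜ}) ∧ c • pq = pq} =
      Nat.card {P : Set (Fin n) // (J : Set (Fin n)) ⊆ P} := by
    apply Nat.card_congr
    symm
    refine Equiv.ofBijective
      (fun P => ⟨{P.1, P.1ᶜ}, ⟨P.1, rfl⟩, (part1 P.1).mpr (Or.inl P.2)⟩) ⟨?_, ?_⟩
    · rintro ⟨P, hP⟩ ⟨Q, hQ⟩ hPQ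
      simp only [Subtype.mk.injEq] at hPQ
      have : P ∈ ({Q, Qᶜ} : Set (Set (Fin n))) := by
        rw [← hPQ]; exact Set.mem_insert _ _
      rcases this with h1 | h1
      · exact Subtype.ext h1
      · exfalso
        simp only [Set.mem_singleton_iff] at h1
        obtain ⟨x, hx⟩ := hJnonempty
        have hxP : x ∈ P := hP (by simpa using hx)
        have hxQ : x ∈ Q := hQ (by simpa using hx)
        rw [h1] at hxP
        exact hxP hxQ
    · rintro ⟨pq, ⟨P, rfl⟩, hfix⟩
      rcases (part1 P).mp hfix with h | h
      · exact ⟨⟨P, h⟩, rfl⟩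
      · refine ⟨⟨Pᶜ, h⟩, ?_⟩
        apply Subtype.ext
        simp only
        rw [compl_compl, Set.pair_comm]
  rw [hbij]
  -- supersets of J correspond to subsets of the complement
  have hcard : Nat.card {P : Set (Fin n) // (J : Set (Fin n)) ⊆ P} =
      Nat.card (Set {x : Fin n // x ∉ J}) := by
    apply Nat.card_congr
    refine ⟨fun P => {y | y.1 ∈ P.1},
      fun Q => ⟨(J : Set (Fin n)) ∪ (Subtype.val '' Q), Set.subset_union_left⟩,
      ?_, ?_⟩
    · rintro ⟨P, hP⟩
      apply Subtype.ext
      simp only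
      ext x
      constructor
      · rintro (hx | ⟨y, hy, rfl⟩)
        · exact hP hx
        · exact hy
      · intro hx
        by_cases hxJ : x ∈ J
        · exact Or.inl (by simpa using hxJ)
        · exact Or.inr ⟨⟨x, hxJ⟩, hx, rfl⟩
    · intro Q
      ext y
      simp only [Set.mem_setOf_eq, Set.mem_union]
      constructor
      · rintro (hy | ⟨z, hz, hzy⟩)
        · exact absurd (by simpa using hy) y.2
        · rwa [Subtype.ext hzy] at hz
      · intro hy
        exact Or.inr ⟨y, hy, rfl⟩
  rw [hcard, Nat.card_eq_fintype_card, Fintype.card_set]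
  rw [Nat.even_pow]
  refine ⟨even_two, ?_⟩
  have : Nonempty {x : Fin n // x ∉ J} := ⟨⟨x0, hx0⟩⟩
  have h1 : Fintype.card {x : Fin n // x ∉ J} = n - J.card := by
    simp [Fintype.card_subtype_compl, Fintype.card_fin]
  rw [h1]
  omega
end

section
/- Let M be an n×n lower triangular integer matrix with nonzero diagonal entries, and suppose that for every row i whose diagonal entry is divisible by a prime p, every entry of row i is divisible by p. Then the rank of M modulo p equals the number of rows whose diagonal entry is not divisible by p. -/
open Matrix

/-- Selecting a subset of the columns cannot increase the rank. -/
lemma rank_submatrix_id_le {K : Type*} [Field K] {m k l : ℕ}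
    (A : Matrix (Fin m) (Fin k) K) (g : Fin l → Fin k) :
    (A.submatrix id g).rank ≤ A.rank := by
  rw [Matrix.rank_eq_finrank_span_cols, Matrix.rank_eq_finrank_span_cols]
  apply Submodule.finrank_mono
  apply Submodule.span_mono
  rintro _ ⟨j, rfl⟩
  exact ⟨g j, rfl⟩

/-- Selecting a subset of the rows cannot increase the rank. -/
lemma rank_submatrix_row_le {K : Type*} [Field K] {m k l : ℕ}
    (A : Matrix (Fin m) (Fin k) K) (g : Fin l → Fin m) :
    (A.submatrix g id).rank ≤ A.rank := by
  rw [← Matrix.rank_transpose (A.submatrix g id), ← Matrix.rank_transpose A]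
  exact rank_submatrix_id_le Aᵀ g

/-- Let `M` be an `n × n` lower triangular integer matrix with nonzero diagonal entries
such that whenever a prime `p` divides a diagonal entry `M i i`, it divides every entry of
row `i`. Then the rank of `M` modulo `p` equals the number of rows whose diagonal entry is
not divisible by `p`. -/
theorem triangular_matrix_p_rank
    (n p : ℕ) [Fact p.Prime] (M : Matrix (Fin n) (Fin n) ℤ)
    (htri : ∀ i j : Fin n, i < j → M i j = 0)
    (hdiag : ∀ i : Fin n, M i i ≠ 0)
    (hdiv : ∀ i j : Fin n, (p : ℤ) ∣ M i i → (p : ℤ) ∣ M i j) :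
    (M.map (Int.cast : ℤ → ZMod p)).rank =
      (Finset.univ.filter fun i : Fin n => ¬ (p : ℤ) ∣ M i i).card := by
  classical
  set N : Matrix (Fin n) (Fin n) (ZMod p) := M.map (Int.cast : ℤ → ZMod p) with hN
  set s : Finset (Fin n) := Finset.univ.filter fun i : Fin n => ¬ (p : ℤ) ∣ M i i with hs
  set k : ℕ := s.card with hk
  set g : Fin k ↪o Fin n := s.orderEmbOfFin rfl with hg
  have hgmem : ∀ a : Fin k, g a ∈ s := fun a => s.orderEmbOfFin_mem rfl a
  have hgd : ∀ a : Fin k, ¬ (p : ℤ) ∣ M (g a) (g a) := by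
    intro a
    have := hgmem a
    rw [hs, Finset.mem_filter] at this
    exact this.2
  -- the submatrix on rows/columns in `s` is lower triangular with nonzero diagonal
  have hBdet : IsUnit (N.submatrix g g).det := by
    have htri' : (N.submatrix g g).BlockTriangular OrderDual.toDual := by
      intro a b hab
      have hab' : a < b := hab
      have : (g a : Fin n) < g b := g.strictMono hab'
      simp only [Matrix.submatrix_apply, hN, Matrix.map_apply, htri _ _ this, Int.cast_zero]
    rw [Matrix.det_of_lowerTriangular _ htri', isUnit_iff_ne_zero]
    apply Finset.prod_ne_zero_iff.mpr
    intro a _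
    have : (N.submatrix g g) a a ≠ 0 := by
      simp only [Matrix.submatrix_apply, hN, Matrix.map_apply]
      rw [Ne, ZMod.intCast_zmod_eq_zero_iff_dvd]
      exact hgd a
    exact this
  have hlow : k ≤ N.rank := by
    have h1 : (N.submatrix g g).rank = k := by
      rw [Matrix.rank_of_isUnit _ (Matrix.isUnit_iff_isUnit_det _ |>.mpr hBdet)]
      simp
    have h2 : (N.submatrix g g).rank ≤ N.rank := by
      have : N.submatrix g g = (N.submatrix g id).submatrix id g := rfl
      rw [this]
      exact (rank_submatrix_id_le _ _).trans (rank_submatrix_row_le _ _)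
    omega
  have hup : N.rank ≤ k := by
    have h1 : N.rank = Module.finrank (ZMod p) (Submodule.span (ZMod p) (Set.range N)) :=
      Matrix.rank_eq_finrank_span_row N
    have hsub : Submodule.span (ZMod p) (Set.range N) ≤
        Submodule.span (ZMod p) (Set.range (N.submatrix g id)) := by
      rw [Submodule.span_le]
      rintro _ ⟨i, rfl⟩
      by_cases hi : i ∈ s
      · obtain ⟨a, ha⟩ : ∃ a, g a = i := by
          have : (i : Fin n) ∈ Set.range g := by
            rw [hg, Finset.range_orderEmbOfFin]; exact_mod_cast hi
          exact this
        exact Submodule.subset_span ⟨a, by rw [← ha]; rfl⟩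
      · have : N i = 0 := by
          funext j
          have hdvd : (p : ℤ) ∣ M i i := by
            rw [hs, Finset.mem_filter] at hi
            simpa using hi
          simp only [hN, Matrix.map_apply, Pi.zero_apply]
          rw [ZMod.intCast_zmod_eq_zero_iff_dvd]
          exact hdiv i j hdvd
        rw [this]
        exact Submodule.zero_mem _
    have h2 : Module.finrank (ZMod p) (Submodule.span (ZMod p) (Set.range N)) ≤
        Module.finrank (ZMod p) (Submodule.span (ZMod p) (Set.range (N.submatrix g id))) :=
      Submodule.finrank_mono hsub
    have h3 : Module.finrank (ZMod p)
        (Submodule.span (ZMod p) (Set.range (N.submatrix g id))) = (N.submatrix g id).rank :=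
      (Matrix.rank_eq_finrank_span_row _).symm
    have h4 : (N.submatrix g id).rank ≤ k := Matrix.rank_le_card_height _ |>.trans (by simp)
    omega
  omega
end
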